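/- arXiv:2310.09113 — 2 statements merged into one kernel-verified Lean document; each statement's English description precedes it below -/
import Mathlib

section
/- Let π : (T₁,m₁) → (T₂,m₂) be a flow submersion and let x ∈ T₁. Then for every z ∈ T₂ with z ≤ π(x), one has m₂(z) = c(x) · Σ_{y ∈ T₁ : y ≤ x and π(y) = z} m₁(y), where c(x) = m₂(π(x))/m₁(x). In other words, the restriction of m₂ to the set of descendants of π(x) is c(x) times the push-forward via π of the restriction of m₁ to the set of descendants of x. -/
open scoped ENNReal NNReal
open MeasureTheory Filter

namespace Flow

/-- A tree with root at infinity: a set with a predecessor map, no cycles,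
joint ancestors, and finitely many successors at each vertex. -/
structure RootedTree (T : Type*) where
  pred : T → T
  no_cycle : ∀ (x : T) (k : ℕ), 1 ≤ k → pred^[k] x ≠ x
  connected : ∀ x y : T, ∃ k l : ℕ, pred^[k] x = pred^[l] y
  succ_finite : ∀ x : T, {y : T | pred y = x}.Finite

variable {T T₁ T₂ : Type*}

/-- The graph distance on a tree with root at infinity. -/
noncomputable def RootedTree.dist (t : RootedTree T) (x y : T) : ℕ :=
  sInf {n : ℕ | ∃ k l : ℕ, k + l = n ∧ t.pred^[k] x = t.pred^[l] y}

/-- The partial order: `x ≤ y` iff `y` is an ancestor of `x`. -/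
def RootedTree.le (t : RootedTree T) (x y : T) : Prop :=
  ∃ k : ℕ, t.pred^[k] x = y

def RootedTree.lt (t : RootedTree T) (x y : T) : Prop :=
  t.le x y ∧ x ≠ y

/-- A flow measure on a tree with root at infinity. -/
structure IsFlowMeasure (t : RootedTree T) (m : T → ℝ) : Prop where
  pos : ∀ x, 0 < m x
  flow : ∀ x, m x = ∑' y : {y : T // t.pred y = x}, m (y : T)

/-- A level function on a tree with root at infinity. -/
def IsLevel (t : RootedTree T) (lev : T → ℤ) : Prop :=
  ∀ x : T, lev (t.pred x) = lev x + 1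

/-- A homogeneous tree where every vertex has exactly `q` successors. -/
def IsHomogeneous (t : RootedTree T) (q : ℕ) : Prop :=
  ∀ x : T, {y : T | t.pred y = x}.ncard = q

/-- The canonical flow measure `q ^ ℓ(x)` on the homogeneous tree of index `q`. -/
noncomputable def canonicalFlow (q : ℕ) (lev : T → ℤ) : T → ℝ :=
  fun x => (q : ℝ) ^ (lev x)

/-- A `q`-uniformly rational flow measure. -/
def UniformlyRational (t : RootedTree T) (m : T → ℝ) (q : ℕ) : Prop :=
  ∀ x : T, ∃ n : ℕ, 0 < n ∧ (q : ℝ) * m x = (n : ℝ) * m (t.pred x)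

/-- The `L^p(m)` norm of a function on a flow tree, `p ∈ [1,∞]`. -/
noncomputable def lpNorm (m : T → ℝ) (p : ℝ≥0∞) (f : T → ℂ) : ℝ≥0∞ :=
  if p = ∞ then ⨆ x : T, (‖f x‖₊ : ℝ≥0∞)
  else (∑' x : T, (‖f x‖₊ : ℝ≥0∞) ^ p.toReal * ENNReal.ofReal (m x)) ^ (1 / p.toReal)

/-- The measure of a subset of a flow tree. -/
noncomputable def setMass (m : T → ℝ) (S : Set T) : ℝ≥0∞ :=
  ∑' x : S, ENNReal.ofReal (m (x : T))

/-- Boundedness of an operator on `L^p(m)`. -/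
def BoundedOnLp (m : T → ℝ) (p : ℝ≥0∞) (O : (T → ℂ) → (T → ℂ)) : Prop :=
  ∃ C : ℝ, 0 < C ∧ ∀ f : T → ℂ, lpNorm m p f < ∞ →
    lpNorm m p (O f) ≤ ENNReal.ofReal C * lpNorm m p f

/-- Boundedness on `L^p(m)` of an operator defined on `L²(m) ∩ L^p(m)`. -/
def BoundedOnLp₂ (m : T → ℝ) (p : ℝ≥0∞) (O : (T → ℂ) → (T → ℂ)) : Prop :=
  ∃ C : ℝ, 0 < C ∧ ∀ f : T → ℂ, lpNorm m 2 f < ∞ → lpNorm m p f < ∞ →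
    lpNorm m p (O f) ≤ ENNReal.ofReal C * lpNorm m p f

/-- The `L^p → L^p` operator norm (supremum over the unit ball). -/
noncomputable def opNormLp (m : T → ℝ) (p : ℝ≥0∞) (O : (T → ℂ) → (T → ℂ)) : ℝ≥0∞ :=
  ⨆ f : {f : T → ℂ // lpNorm m p f ≤ 1}, lpNorm m p (O f.1)

/-- The `L^p → L^p` operator norm of an operator defined on `L²(m) ∩ L^p(m)`. -/
noncomputable def opNormLp₂ (m : T → ℝ) (p : ℝ≥0∞) (O : (T → ℂ) → (T → ℂ)) : ℝ≥0∞ :=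
  ⨆ f : {f : T → ℂ // lpNorm m 2 f < ∞ ∧ lpNorm m p f ≤ 1}, lpNorm m p (O f.1)

/-- The flow measure `m` is locally doubling. -/
def LocallyDoubling (t : RootedTree T) (m : T → ℝ) : Prop :=
  ∀ R : ℝ, 0 < R → ∃ D : ℝ, 0 < D ∧ ∀ (x : T) (r : ℝ), 0 < r → r ≤ R →
    setMass m {y : T | (t.dist x y : ℝ) ≤ 2 * r} ≤
      ENNReal.ofReal D * setMass m {y : T | (t.dist x y : ℝ) ≤ r}

/-- The shift operator `Σ f (x) = f(𝔭(x))`. -/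
noncomputable def shiftOp (t : RootedTree T) (f : T → ℂ) : T → ℂ :=
  fun x => f (t.pred x)

/-- The adjoint shift `Σ* f (x) = m(x)⁻¹ Σ_{y ∈ succ(x)} f(y) m(y)`. -/
noncomputable def shiftStarOp (t : RootedTree T) (m : T → ℝ) (f : T → ℂ) : T → ℂ :=
  fun x => ((m x : ℂ))⁻¹ * ∑' y : {y : T // t.pred y = x}, f (y : T) * ((m (y : T) : ℂ))

/-- The flow gradient `∇ = I - Σ`. -/
noncomputable def gradOp (t : RootedTree T) (f : T → ℂ) : T → ℂ :=
  fun x => f x - f (t.pred x)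

/-- The adjoint flow gradient `∇* = I - Σ*`. -/
noncomputable def gradStarOp (t : RootedTree T) (m : T → ℝ) (f : T → ℂ) : T → ℂ :=
  fun x => f x - shiftStarOp t m f x

/-- The flow Laplacian `𝓛 = I - (Σ + Σ*)/2`. -/
noncomputable def lapOp (t : RootedTree T) (m : T → ℝ) (f : T → ℂ) : T → ℂ :=
  fun x => f x - (shiftOp t f x + shiftStarOp t m f x) / 2

/-- The heat semigroup `e^{-s𝓛}`, given by the exponential power series. -/
noncomputable def heatOp (t : RootedTree T) (m : T → ℝ) (s : ℝ) (f : T → ℂ) : T → ℂ :=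
  fun x => ∑' k : ℕ, ((-(s : ℂ)) ^ k / (Nat.factorial k : ℂ)) * ((lapOp t m)^[k] f) x

/-- The integral kernel of an operator: `K_O(x,y) = O(𝟙_{y})(x) / m(y)`. -/
noncomputable def opKernel (m : T → ℝ) (O : (T → ℂ) → (T → ℂ)) (x y : T) : ℂ :=
  O (Set.indicator {y} fun _ => (1 : ℂ)) x / (m y : ℂ)

/-- The (formal) adjoint of an operator, given by the conjugate-transpose kernel. -/
noncomputable def adjointOp (m : T → ℝ) (O : (T → ℂ) → (T → ℂ)) (f : T → ℂ) : T → ℂ :=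
  fun x => ∑' y : T, (starRingEnd ℂ) (opKernel m O y x) * f y * ((m y : ℂ))

/-- A polynomial applied to an operator. -/
noncomputable def polyApply (L : (T → ℂ) → (T → ℂ)) (P : Polynomial ℂ) (f : T → ℂ) : T → ℂ :=
  fun x => ∑ i ∈ Finset.range (P.natDegree + 1), P.coeff i * (L^[i] f) x

/-- `B` is the continuous functional calculus `F(L)` of the self-adjoint operator `L`
(whose spectrum is contained in `[0,2]`): `B` is approximated on `L²(m)` by polynomials
in `L`, with operator-norm error controlled by the sup-norm error on `[0,2]`. -/
def IsCfcOf (m : T → ℝ) (L : (T → ℂ) → (T → ℂ)) (F : ℝ → ℂ)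
    (B : (T → ℂ) → (T → ℂ)) : Prop :=
  ∀ ε : ℝ, 0 < ε → ∃ P : Polynomial ℂ,
    (∀ lam : ℝ, lam ∈ Set.Icc (0 : ℝ) 2 → ‖F lam - P.eval (lam : ℂ)‖ ≤ ε) ∧
    ∀ f : T → ℂ, lpNorm m 2 f < ∞ →
      lpNorm m 2 (fun x => B f x - polyApply L P f x) ≤ ENNReal.ofReal ε * lpNorm m 2 f

/-- `Φ` is the Borel functional calculus of the self-adjoint operator `L` with spectrum
in `[0,2]`: it agrees with the continuous functional calculus on continuous functions and
satisfies dominated convergence (bounded pointwise convergence on `[0,2]` implies strong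
convergence on `L²(m)`). These properties determine `Φ F` uniquely on `L²(m)` for every
bounded Borel `F`. -/
structure IsBorelFC (m : T → ℝ) (L : (T → ℂ) → (T → ℂ))
    (Φ : (ℝ → ℂ) → (T → ℂ) → (T → ℂ)) : Prop where
  cfc_agree : ∀ F : ℝ → ℂ, ContinuousOn F (Set.Icc 0 2) → IsCfcOf m L F (Φ F)
  dominated : ∀ (Fs : ℕ → ℝ → ℂ) (F : ℝ → ℂ) (C : ℝ),
    (∀ n, Measurable (Fs n)) → Measurable F →
    (∀ n, ∀ lam ∈ Set.Icc (0 : ℝ) 2, ‖Fs n lam‖ ≤ C) →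
    (∀ lam ∈ Set.Icc (0 : ℝ) 2, Tendsto (fun n => Fs n lam) atTop (nhds (F lam))) →
    ∀ f : T → ℂ, lpNorm m 2 f < ∞ →
      Tendsto (fun n => lpNorm m 2 (fun x => Φ (Fs n) f x - Φ F f x)) atTop (nhds 0)

/-- The truncated Riesz transform `∇ F_N(𝓛)`, where
`F_N(s) = π^{-1/2} ∫₀^N e^{-ts} t^{-1/2} dt`. -/
noncomputable def rieszApprox (t : RootedTree T) (m : T → ℝ) (N : ℕ) (f : T → ℂ) : T → ℂ :=
  fun x => (Real.sqrt Real.pi)⁻¹ •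
    ∫ u in Set.Ioc (0 : ℝ) (N : ℝ), (Real.sqrt u)⁻¹ • gradOp t (heatOp t m u f) x

/-- `g = R f`, where the Riesz transform `R = ∇ 𝓛^{-1/2}` is the limit of the truncated
Riesz transforms `∇ F_N(𝓛)` in the strong operator topology of `L²(m)`. -/
def IsRieszOf (t : RootedTree T) (m : T → ℝ) (f g : T → ℂ) : Prop :=
  Tendsto (fun N : ℕ => lpNorm m 2 (fun x => rieszApprox t m N f x - g x)) atTop (nhds 0)

/-- The integral kernel of the Riesz transform:
`K_R(x,y) = π^{-1/2} ∫₀^∞ K_{∇ e^{-u𝓛}}(x,y) u^{-1/2} du`. -/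
noncomputable def rieszKernel (t : RootedTree T) (m : T → ℝ) (x y : T) : ℂ :=
  (Real.sqrt Real.pi)⁻¹ •
    ∫ u in Set.Ioi (0 : ℝ),
      (Real.sqrt u)⁻¹ • opKernel m (fun f => gradOp t (heatOp t m u f)) x y

/-- The convolution kernel `k̃_ℤ(n) = (2√2/π) n/(n² - 1/4)` of the skew-symmetric part of
the discrete Hilbert transform. -/
noncomputable def ktZ (n : ℤ) : ℂ :=
  ((2 * Real.sqrt 2 / Real.pi : ℝ) : ℂ) * (n : ℂ) / ((n : ℂ) ^ 2 - 1 / 4)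

/-- `lam` belongs to the resolvent set of the flow Laplacian on `L^p(m)`:
`lam - 𝓛` has a bounded two-sided inverse on `L^p(m)`. -/
def InResolvent (t : RootedTree T) (m : T → ℝ) (p : ℝ≥0∞) (lam : ℂ) : Prop :=
  ∃ B : (T → ℂ) → (T → ℂ), BoundedOnLp m p B ∧
    (∀ f : T → ℂ, lpNorm m p f < ∞ →
      B (fun x => lam * f x - lapOp t m f x) = f) ∧
    (∀ f : T → ℂ, lpNorm m p f < ∞ →
      (fun x => lam * B f x - lapOp t m (B f) x) = f)

/-- A submersion between trees with root at infinity. -/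
structure IsSubmersion (t₁ : RootedTree T₁) (t₂ : RootedTree T₂) (π : T₁ → T₂) : Prop where
  map_pred : ∀ x : T₁, π (t₁.pred x) = t₂.pred (π x)
  map_succ : ∀ x : T₁, π '' {y : T₁ | t₁.pred y = x} = {z : T₂ | t₂.pred z = π x}

/-- `π`-compatibility of the flow measures `m₁`, `m₂`:
`m₂(π x)/m₂(𝔭(π x)) = m₁(π⁻¹{π x} ∩ succ(𝔭 x))/m₁(𝔭 x)`. -/
def FlowCompatible (t₁ : RootedTree T₁) (t₂ : RootedTree T₂) (π : T₁ → T₂)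
    (m₁ : T₁ → ℝ) (m₂ : T₂ → ℝ) : Prop :=
  ∀ x : T₁,
    m₂ (π x) / m₂ (t₂.pred (π x)) =
      (∑' y : {y : T₁ // π y = π x ∧ t₁.pred y = t₁.pred x}, m₁ (y : T₁)) / m₁ (t₁.pred x)

/-- `O'` witnesses `π`-compatibility of `O`: `O Φ_π = Φ_π O'` and `O* Φ_π = Φ_π O'*`
on `L^∞(m₂)`, where `Φ_π f = f ∘ π` is the lifting operator. -/
def CompatiblePair (t₁ : RootedTree T₁) (t₂ : RootedTree T₂) (π : T₁ → T₂)
    (m₁ : T₁ → ℝ) (m₂ : T₂ → ℝ)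
    (O : (T₁ → ℂ) → (T₁ → ℂ)) (O' : (T₂ → ℂ) → (T₂ → ℂ)) : Prop :=
  (∀ f : T₂ → ℂ, lpNorm m₂ ∞ f < ∞ → O (f ∘ π) = (O' f) ∘ π) ∧
  (∀ f : T₂ → ℂ, lpNorm m₂ ∞ f < ∞ →
    adjointOp m₁ O (f ∘ π) = (adjointOp m₂ O' f) ∘ π)

/-- The squared Sobolev norm `∫ (1+ξ²)^s |G(ξ)|² dξ`, applied to the Fourier transform `G`
of the function under consideration. -/
noncomputable def sobolevWeight (s : ℝ) (G : ℝ → ℂ) : ℝ≥0∞ :=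
  ∫⁻ ξ : ℝ, ENNReal.ofReal ((1 + ξ ^ 2) ^ s) * (‖G ξ‖₊ : ℝ≥0∞) ^ 2

/-- The Sobolev norm `(∫ (1+ξ²)^s |G(ξ)|² dξ)^{1/2}`. -/
noncomputable def sobolevNorm (s : ℝ) (G : ℝ → ℂ) : ℝ≥0∞ :=
  sobolevWeight s G ^ (1 / 2 : ℝ)

/-- `G` is the (distributional) Fourier transform of `F`, characterised by duality
against Schwartz functions. -/
def FourierCoupled (F G : ℝ → ℂ) : Prop :=
  ∀ φ : SchwartzMap ℝ ℂ,
    (∫ x : ℝ, F x * FourierTransform.fourier (fun y : ℝ => φ y) x) = ∫ ξ : ℝ, G ξ * φ ξ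

/-- The coefficients `g_F(n) = -(i/π) ∫_{-π}^{π} sin θ · F(1-cos θ) e^{inθ} dθ`,
i.e. `∇̃_ℤ k_{F(Δ_ℤ)}(n)` when `F` is bounded Borel on `[0,2]`. -/
noncomputable def gCoef (F : ℝ → ℂ) (n : ℤ) : ℂ :=
  (-(Complex.I / (Real.pi : ℂ))) *
    ∫ θ in Set.Ioc (-Real.pi) Real.pi,
      ((Real.sin θ : ℂ)) * F (1 - Real.cos θ) * Complex.exp ((n : ℂ) * (θ : ℂ) * Complex.I)

lemma predZ_iter (k : ℕ) (n : ℤ) : (fun n : ℤ => n + 1)^[k] n = n + k := by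
  induction k generalizing n with
  | zero => simp
  | succ k ih =>
      rw [Function.iterate_succ_apply, ih]
      push_cast
      ring

/-- `ℤ` as a tree with root at infinity (`𝔭(n) = n+1`); together with the flow measure
`mZ ≡ 1` this is the homogeneous flow tree `T₁`, whose flow Laplacian is the discrete
Laplacian `Δ_ℤ`. -/
noncomputable def treeZ : RootedTree ℤ where
  pred n := n + 1
  no_cycle x k hk := by rw [predZ_iter]; omega
  connected x y := ⟨(y - x).toNat, (x - y).toNat, by rw [predZ_iter, predZ_iter]; omega⟩
  succ_finite x := (Set.finite_singleton (x - 1)).subset (by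
    intro y hy
    simp only [Set.mem_setOf_eq] at hy
    simp only [Set.mem_singleton_iff]
    omega)

/-- The counting flow measure on `ℤ`. -/
def mZ : ℤ → ℝ := fun _ => 1

/-- The convolution kernel of a translation-invariant operator on `ℤ`: `k_B = B δ₀`. -/
noncomputable def kZker (B : (ℤ → ℂ) → (ℤ → ℂ)) (n : ℤ) : ℂ :=
  B (Set.indicator {0} fun _ => (1 : ℂ)) n

end Flow

section FlowAux

open Flow

variable {T T₁ T₂ : Type*}

lemma FlowAux.iter_finite (t : RootedTree T) (k : ℕ) (x : T) :
    {y : T | t.pred^[k] y = x}.Finite := by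
  induction k generalizing x with
  | zero => simp [Set.setOf_eq_eq_singleton]
  | succ k ih =>
      have h : {y : T | t.pred^[k+1] y = x} =
          ⋃ w ∈ {w : T | t.pred^[k] w = x}, {y : T | t.pred y = w} := by
        ext y
        simp only [Set.mem_setOf_eq, Set.mem_iUnion, Function.iterate_succ_apply]
        constructor
        · intro h; exact ⟨t.pred y, h, rfl⟩
        · rintro ⟨w, hw, rfl⟩; exact hw
      rw [h]
      exact (ih x).biUnion (fun w _ => t.succ_finite w)

lemma FlowAux.iter_inj (t : RootedTree T) {z : T} {j k : ℕ}
    (h : t.pred^[j] z = t.pred^[k] z) : j = k := by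
  rcases lt_trichotomy j k with hlt | he | hgt
  · exfalso
    have hc : t.pred^[k - j] (t.pred^[j] z) = t.pred^[j] z := by
      rw [← Function.iterate_add_apply, Nat.sub_add_cancel hlt.le, ← h]
    exact t.no_cycle _ (k - j) (by omega) hc
  · exact he
  · exfalso
    have hc : t.pred^[j - k] (t.pred^[k] z) = t.pred^[k] z := by
      rw [← Function.iterate_add_apply, Nat.sub_add_cancel hgt.le, h]
    exact t.no_cycle _ (j - k) (by omega) hc

lemma FlowAux.map_iter {t₁ : RootedTree T₁} {t₂ : RootedTree T₂} {π : T₁ → T₂}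
    (hsub : IsSubmersion t₁ t₂ π) (k : ℕ) (y : T₁) :
    π (t₁.pred^[k] y) = t₂.pred^[k] (π y) := by
  induction k generalizing y with
  | zero => rfl
  | succ k ih =>
      rw [Function.iterate_succ_apply, ih, hsub.map_pred, ← Function.iterate_succ_apply]

lemma FlowAux.tsum_set (f : T → ℝ) {S : Set T} (hS : S.Finite) :
    ∑' y : S, f (y : T) = ∑ y ∈ hS.toFinset, f y := by
  conv_lhs => rw [← hS.coe_toFinset]
  exact hS.toFinset.tsum_subtype' f

end FlowAux

/-- Push-forward property of flow submersions: if
`π : (T₁,m₁) → (T₂,m₂)` is a flow submersion and `x ∈ T₁`, then for every `z ≤ π(x)`,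
`m₂(z) = c(x) · Σ_{y ≤ x, π(y) = z} m₁(y)` where `c(x) = m₂(π(x))/m₁(x)`. -/
theorem flow_submersion_pushforward {T₁ T₂ : Type*}
    (t₁ : Flow.RootedTree T₁) (t₂ : Flow.RootedTree T₂)
    (m₁ : T₁ → ℝ) (m₂ : T₂ → ℝ)
    (hm₁ : Flow.IsFlowMeasure t₁ m₁) (hm₂ : Flow.IsFlowMeasure t₂ m₂)
    (π : T₁ → T₂) (hsub : Flow.IsSubmersion t₁ t₂ π)
    (hcomp : Flow.FlowCompatible t₁ t₂ π m₁ m₂) (x : T₁) :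
    ∀ z : T₂, t₂.le z (π x) →
      m₂ z = (m₂ (π x) / m₁ x) * ∑' y : {y : T₁ // t₁.le y x ∧ π y = z}, m₁ (y : T₁) := by
  classical
  have key : ∀ (k : ℕ) (z : T₂), t₂.pred^[k] z = π x →
      m₂ z * m₁ x = m₂ (π x) *
        ∑' y : {y : T₁ | t₁.pred^[k] y = x ∧ π y = z}, m₁ (y : T₁) := by
    intro k
    induction k with
    | zero =>
        intro z hz
        simp only [Function.iterate_zero, id] at hz
        have hset : {y : T₁ | t₁.pred^[0] y = x ∧ π y = z} = {x} := by
          ext y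
          simp only [Set.mem_setOf_eq, Function.iterate_zero, id, Set.mem_singleton_iff]
          constructor
          · rintro ⟨rfl, _⟩; rfl
          · rintro rfl; exact ⟨rfl, hz.symm⟩
        rw [hset, tsum_singleton, hz]
    | succ k ih =>
        intro z hz
        have hz' : t₂.pred^[k] (t₂.pred z) = π x := by
          rw [← Function.iterate_succ_apply]; exact hz
        have hAfin : {y : T₁ | t₁.pred^[k+1] y = x ∧ π y = z}.Finite :=
          (FlowAux.iter_finite t₁ (k+1) x).subset (fun y hy => hy.1)
        have hBfin : {y : T₁ | t₁.pred^[k] y = x ∧ π y = t₂.pred z}.Finite :=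
          (FlowAux.iter_finite t₁ k x).subset (fun y hy => hy.1)
        rw [FlowAux.tsum_set m₁ hAfin]
        have hmap : ∀ y ∈ hAfin.toFinset, t₁.pred y ∈ hBfin.toFinset := by
          intro y hy
          rw [Set.Finite.mem_toFinset] at hy ⊢
          refine ⟨?_, ?_⟩
          · rw [← Function.iterate_succ_apply]; exact hy.1
          · rw [hsub.map_pred, hy.2]
        rw [← Finset.sum_fiberwise_of_maps_to hmap m₁]
        have hinner : ∀ y' ∈ hBfin.toFinset,
            (∑ w ∈ hAfin.toFinset.filter (fun w => t₁.pred w = y'), m₁ w)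
              = m₂ z / m₂ (t₂.pred z) * m₁ y' := by
          intro y' hy'
          rw [Set.Finite.mem_toFinset] at hy'
          have hz_succ : z ∈ {u : T₂ | t₂.pred u = π y'} := by
            simp only [Set.mem_setOf_eq, hy'.2]
          rw [← hsub.map_succ y'] at hz_succ
          obtain ⟨y, hy_pred, hy_pi⟩ := hz_succ
          have hy_pred' : t₁.pred y = y' := hy_pred
          have hc := hcomp y
          rw [hy_pi, hy_pred'] at hc
          have hCfin : {w : T₁ | π w = z ∧ t₁.pred w = y'}.Finite :=
            (t₁.succ_finite y').subset (fun w hw => hw.2)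
          have htC : (∑' w : {w : T₁ // π w = z ∧ t₁.pred w = y'}, m₁ (w : T₁))
              = ∑ w ∈ hCfin.toFinset, m₁ w := FlowAux.tsum_set m₁ hCfin
          rw [htC] at hc
          have hfe : hAfin.toFinset.filter (fun w => t₁.pred w = y') = hCfin.toFinset := by
            ext w
            simp only [Finset.mem_filter, Set.Finite.mem_toFinset, Set.mem_setOf_eq]
            constructor
            · rintro ⟨⟨_, hπ⟩, hp⟩; exact ⟨hπ, hp⟩
            · rintro ⟨hπ, hp⟩
              refine ⟨⟨?_, hπ⟩, hp⟩
              rw [Function.iterate_succ_apply, hp]; exact hy'.1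
          rw [hfe]
          have h1 : m₁ y' ≠ 0 := ne_of_gt (hm₁.pos y')
          have h2 : m₂ (t₂.pred z) ≠ 0 := ne_of_gt (hm₂.pos (t₂.pred z))
          field_simp at hc ⊢
          linarith [hc]
        rw [Finset.sum_congr rfl hinner, ← Finset.mul_sum]
        have hIH := ih (t₂.pred z) hz'
        rw [FlowAux.tsum_set m₁ hBfin] at hIH
        have h2 : m₂ (t₂.pred z) ≠ 0 := ne_of_gt (hm₂.pos (t₂.pred z))
        field_simp
        linear_combination m₂ z * hIH
  intro z hz
  obtain ⟨k, hk⟩ := hz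
  have hkey := key k z hk
  have hset : {y : T₁ | t₁.le y x ∧ π y = z} = {y : T₁ | t₁.pred^[k] y = x ∧ π y = z} := by
    ext y
    simp only [Set.mem_setOf_eq]
    constructor
    · rintro ⟨⟨j, hj⟩, hπ⟩
      have heq : t₂.pred^[j] z = t₂.pred^[k] z := by
        rw [hk, ← hj, ← hπ, FlowAux.map_iter hsub, hπ]
      have hjk : j = k := FlowAux.iter_inj t₂ heq
      exact ⟨hjk ▸ hj, hπ⟩
    · rintro ⟨hj, hπ⟩; exact ⟨⟨k, hj⟩, hπ⟩
  show m₂ z = (m₂ (π x) / m₁ x) *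
      ∑' y : {y : T₁ | t₁.le y x ∧ π y = z}, m₁ (y : T₁)
  rw [hset]
  have h1 : m₁ x ≠ 0 := ne_of_gt (hm₁.pos x)
  have hkey' : m₂ z * m₁ x =
      m₂ (π x) * ∑' (y : { w : T₁ // t₁.pred^[k] w = x ∧ π w = z }), m₁ (y : T₁) := hkey
  field_simp
  linear_combination hkey
end

section
/- Let q ≥ 2 be an integer and let F ∈ C([0,2]). Then for all x, y ∈ T_q, the integral kernel of F(𝓛_{T_q}) satisfies K_{F(𝓛_{T_q})}(x,y) = q^{−(ℓ(x)+ℓ(y))/2} E_F(d(x,y)), where for k ∈ ℕ, E_F(k) = Σ_{j≥0} q^{−(k+2j)/2} ( k_{F(Δ_ℤ)}(k+2j) − k_{F(Δ_ℤ)}(k+2j+2) ), the series converging absolutely. -/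
open scoped ENNReal NNReal
open MeasureTheory Filter

namespace KF

/-- kernel of Δ_ℤ^n at distance k (radial profile). -/
noncomputable def a : ℕ → ℕ → ℂ
  | 0, k => if k = 0 then 1 else 0
  | n+1, 0 => a n 0 - a n 1
  | n+1, (k+1) => a n (k+1) - (a n k + a n (k+2))/2

/-- even extension to ℤ. -/
noncomputable def aeK (n : ℕ) (m : ℤ) : ℂ := a n m.natAbs

lemma a_support : ∀ n k, n < k → a n k = 0 := by
  intro n
  induction n with
  | zero => intro k hk; match k, hk with | (k+1), _ => rfl
  | succ n ih =>
      intro k hk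
      match k, hk with
      | (k+1), hk =>
        have h1 : a n (k+1) = 0 := ih _ (by omega)
        have h2 : a n k = 0 := ih _ (by omega)
        have h3 : a n (k+2) = 0 := ih _ (by omega)
        show a n (k+1) - (a n k + a n (k+2))/2 = 0
        rw [h1, h2, h3]; ring

lemma ae_support (n : ℕ) (m : ℤ) (h : (n:ℤ) < m) : aeK n m = 0 :=
  a_support n m.natAbs (by omega)

/-- the uniform recurrence for the even extension. -/
lemma ae_rec (n : ℕ) (m : ℤ) :
    aeK (n+1) m = aeK n m - (aeK n (m-1) + aeK n (m+1))/2 := by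
  rcases lt_trichotomy m 0 with hm | hm | hm
  · obtain ⟨k, hk⟩ : ∃ k : ℕ, m = -(k+1) := ⟨(-m-1).toNat, by omega⟩
    subst hk
    have h0 : (-((k:ℤ)+1)).natAbs = k+1 := by omega
    have h1 : (-((k:ℤ)+1)-1).natAbs = k+2 := by omega
    have h2 : (-((k:ℤ)+1)+1).natAbs = k := by omega
    simp only [aeK, h0, h1, h2]
    show a n (k+1) - (a n k + a n (k+2))/2 = _
    ring
  · subst hm
    simp only [aeK]
    norm_num
    rfl
  · obtain ⟨k, hk⟩ : ∃ k : ℕ, m = (k:ℤ)+1 := ⟨(m-1).toNat, by omega⟩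
    subst hk
    have h0 : ((k:ℤ)+1).natAbs = k+1 := by omega
    have h1 : ((k:ℤ)+1-1).natAbs = k := by omega
    have h2 : ((k:ℤ)+1+1).natAbs = k+2 := by omega
    simp only [aeK, h0, h1, h2]
    show a n (k+1) - (a n k + a n (k+2))/2 = _
    ring

end KF

namespace KF2
open KF

noncomputable def u (q : ℕ) : ℝ := (q:ℝ) ^ ((1:ℝ)/2)
noncomputable def uc (q : ℕ) : ℂ := ((u q : ℝ) : ℂ)
noncomputable def W (q k j : ℕ) : ℝ := (q:ℝ) ^ (-(((k:ℝ) + 2*(j:ℝ))/2))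
noncomputable def Wc (q k j : ℕ) : ℂ := ((W q k j : ℝ) : ℂ)

variable {q : ℕ}

lemma u_pos (hq : 0 < q) : 0 < u q := Real.rpow_pos_of_pos (by exact_mod_cast hq) _

lemma uc_ne (hq : 0 < q) : uc q ≠ 0 := by
  simp [uc, Complex.ofReal_ne_zero]; exact (u_pos hq).ne'

lemma W_succ (hq : 0 < q) (k j : ℕ) : W q (k+1) j = (u q)⁻¹ * W q k j := by
  have h0 : (0:ℝ) < (q:ℝ) := by exact_mod_cast hq
  rw [W, W, u, ← Real.rpow_neg h0.le, ← Real.rpow_add h0]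
  congr 1
  push_cast
  ring

lemma Wc_succ (hq : 0 < q) (k j : ℕ) : Wc q (k+1) j = (uc q)⁻¹ * Wc q k j := by
  rw [Wc, Wc, W_succ hq, uc]
  push_cast
  ring

lemma W_shift (hq : 0 < q) (j : ℕ) : W q 0 (j+1) = (u q)⁻¹ * W q 1 j := by
  have h0 : (0:ℝ) < (q:ℝ) := by exact_mod_cast hq
  rw [W, W, u, ← Real.rpow_neg h0.le, ← Real.rpow_add h0]
  congr 1
  push_cast
  ring

lemma Wc_shift (hq : 0 < q) (j : ℕ) : Wc q 0 (j+1) = (uc q)⁻¹ * Wc q 1 j := by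
  rw [Wc, Wc, W_shift hq, uc]; push_cast; ring

lemma W_zero_zero : W q 0 0 = 1 := by
  rw [W]
  norm_num

lemma Wc_zero_zero : Wc q 0 0 = 1 := by rw [Wc, W_zero_zero]; norm_num

noncomputable def g (q : ℕ) : ℕ → ℕ → ℂ
  | 0, k => if k = 0 then 1 else 0
  | n+1, 0 => g q n 0 - ((uc q + (uc q)⁻¹)/2) * g q n 1
  | n+1, (k+1) => g q n (k+1) - ((uc q)⁻¹ * g q n k + uc q * g q n (k+2))/2

lemma ae_zero (m : ℤ) : aeK 0 m = if m = 0 then 1 else 0 := by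
  rw [aeK]
  show (if m.natAbs = 0 then (1:ℂ) else 0) = _
  by_cases h : m = 0 <;> simp [h, Int.natAbs_eq_zero]

lemma Wc_pred (hq : 0 < q) (k j : ℕ) : Wc q k j = uc q * Wc q (k+1) j := by
  rw [Wc_succ hq, mul_inv_cancel_left₀ (uc_ne hq)]

lemma aeext (n : ℕ) {m m' : ℤ} (h : m = m') : aeK n m = aeK n m' := by rw [h]

theorem g_eq (hq : 0 < q) : ∀ n k N, n < N →
    g q n k = ∑ j ∈ Finset.range N,
      Wc q k j * (aeK n ((k:ℤ)+2*j) - aeK n ((k:ℤ)+2*j+2)) := by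
  intro n
  induction n with
  | zero =>
      intro k N hN
      have h0 : g q 0 k = if k = 0 then (1:ℂ) else 0 := rfl
      rw [h0, Finset.sum_eq_single 0]
      · rcases k with _ | k'
        · rw [if_pos rfl, ae_zero, ae_zero, if_pos (by norm_num), if_neg (by norm_num),
            Wc_zero_zero]
          ring
        · rw [if_neg (by omega), ae_zero, ae_zero, if_neg (by push_cast; omega),
            if_neg (by push_cast; omega)]
          ring
      · intro j _ hj
        rw [ae_zero, ae_zero, if_neg (by push_cast; omega), if_neg (by push_cast; omega)]
        ring
      · exact fun h => absurd (Finset.mem_range.mpr hN) h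
  | succ n ih =>
      intro k N hN
      have hN' : n < N := by omega
      have hu : uc q ≠ 0 := uc_ne hq
      rcases k with _ | k'
      · -- k = 0 case
        obtain ⟨N', rfl⟩ : ∃ N', N = N'+1 := ⟨N-1, by omega⟩
        have ih0 := ih 0 (N'+1) hN'
        have ih1 := ih 1 (N'+1) hN'
        simp only [Nat.cast_zero, Nat.cast_one, zero_add] at ih0 ih1 ⊢
        have key : ∀ j ∈ Finset.range (N'+1),
            Wc q 0 j * (aeK (n+1) (2*(j:ℤ)) - aeK (n+1) (2*(j:ℤ)+2))
            = Wc q 0 j * (aeK n (2*(j:ℤ)) - aeK n (2*(j:ℤ)+2))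
              - (Wc q 0 j * (aeK n (2*(j:ℤ)-1) - aeK n (2*(j:ℤ)+1))
                 + uc q * (Wc q 1 j * (aeK n ((1:ℤ)+2*j) - aeK n ((1:ℤ)+2*j+2))))/2 := by
          intro j _
          rw [ae_rec, ae_rec, Wc_pred hq 0 j,
            aeext n (show (2*(j:ℤ)+2-1) = (1:ℤ)+2*j by ring),
            aeext n (show (2*(j:ℤ)+2+1) = ((1:ℤ)+2*j)+2 by ring),
            aeext n (show (2*(j:ℤ)+1) = (1:ℤ)+2*j by ring)]
          ring
        have hsum : ∀ j : ℕ, (2*(j:ℤ)) = ((0:ℕ):ℤ) + 2*j := by intro j; push_cast; ring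
        rw [show (∑ j ∈ Finset.range (N'+1),
              Wc q 0 j * (aeK (n+1) (2*(j:ℤ)) - aeK (n+1) (2*(j:ℤ)+2)))
            = ∑ j ∈ Finset.range (N'+1),
              (Wc q 0 j * (aeK n (2*(j:ℤ)) - aeK n (2*(j:ℤ)+2))
              - (Wc q 0 j * (aeK n (2*(j:ℤ)-1) - aeK n (2*(j:ℤ)+1))
                 + uc q * (Wc q 1 j * (aeK n ((1:ℤ)+2*j) - aeK n ((1:ℤ)+2*j+2))))/2)
            from Finset.sum_congr rfl key,
          Finset.sum_sub_distrib, ← Finset.sum_div, Finset.sum_add_distrib,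
          ← Finset.mul_sum]
        have hshift : ∑ j ∈ Finset.range (N'+1),
            Wc q 0 j * (aeK n (2*(j:ℤ)-1) - aeK n (2*(j:ℤ)+1))
            = (uc q)⁻¹ * ∑ j ∈ Finset.range (N'+1),
              Wc q 1 j * (aeK n ((1:ℤ)+2*j) - aeK n ((1:ℤ)+2*j+2)) := by
          rw [Finset.sum_range_succ' (fun j => Wc q 0 j * (aeK n (2*(j:ℤ)-1) - aeK n (2*(j:ℤ)+1)))]
          have hz : Wc q 0 0 * (aeK n (2*((0:ℕ):ℤ)-1) - aeK n (2*((0:ℕ):ℤ)+1)) = 0 := by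
            rw [aeext n (show (2*((0:ℕ):ℤ)-1) = -1 by norm_num),
              aeext n (show (2*((0:ℕ):ℤ)+1) = 1 by norm_num)]
            have : aeK n (-1) = aeK n 1 := rfl
            rw [this]
            ring
          rw [hz, add_zero]
          have hterm : ∀ j : ℕ,
              Wc q 0 (j+1) * (aeK n (2*((j+1:ℕ):ℤ)-1) - aeK n (2*((j+1:ℕ):ℤ)+1))
              = (uc q)⁻¹ * (Wc q 1 j * (aeK n ((1:ℤ)+2*j) - aeK n ((1:ℤ)+2*j+2))) := by
            intro j
            rw [Wc_shift hq,
              aeext n (show (2*((j+1:ℕ):ℤ)-1) = (1:ℤ)+2*j by push_cast; ring),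
              aeext n (show (2*((j+1:ℕ):ℤ)+1) = ((1:ℤ)+2*j)+2 by push_cast; ring)]
            ring
          rw [Finset.sum_congr rfl (fun j _ => hterm j), ← Finset.mul_sum]
          congr 1
          rw [Finset.sum_range_succ]
          have hvan : Wc q 1 N' * (aeK n ((1:ℤ)+2*N') - aeK n ((1:ℤ)+2*N'+2)) = 0 := by
            rw [ae_support n _ (by omega), ae_support n _ (by omega)]
            ring
          rw [hvan, add_zero]
        rw [hshift, ← ih0, ← ih1]
        show g q n 0 - ((uc q + (uc q)⁻¹)/2) * g q n 1 = _
        ring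
      · -- k = k'+1 case
        have key : ∀ j ∈ Finset.range N,
            Wc q (k'+1) j * (aeK (n+1) (((k'+1:ℕ):ℤ)+2*j) - aeK (n+1) (((k'+1:ℕ):ℤ)+2*j+2))
            = Wc q (k'+1) j * (aeK n (((k'+1:ℕ):ℤ)+2*j) - aeK n (((k'+1:ℕ):ℤ)+2*j+2))
              - ((uc q)⁻¹ * (Wc q k' j * (aeK n ((k':ℤ)+2*j) - aeK n ((k':ℤ)+2*j+2)))
                 + uc q * (Wc q (k'+1+1) j * (aeK n (((k'+1+1:ℕ):ℤ)+2*j) - aeK n (((k'+1+1:ℕ):ℤ)+2*j+2))))/2 := by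
          intro j _
          rw [ae_rec, ae_rec, Wc_pred hq k' j, Wc_succ hq (k'+1) j,
            aeext n (show (((k'+1:ℕ):ℤ)+2*j-1) = (k':ℤ)+2*j by push_cast; ring),
            aeext n (show (((k'+1:ℕ):ℤ)+2*j+1) = ((k'+1+1:ℕ):ℤ)+2*j by push_cast; ring),
            aeext n (show (((k'+1:ℕ):ℤ)+2*j+2-1) = ((k':ℤ)+2*j)+2 by push_cast; ring),
            aeext n (show (((k'+1:ℕ):ℤ)+2*j+2+1) = (((k'+1+1:ℕ):ℤ)+2*j)+2 by push_cast; ring)]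
          linear_combination (Wc q (k'+1) j *
            (aeK n ((k':ℤ)+2*j) - aeK n ((((k'+1+1:ℕ):ℤ)+2*j)+2)
             + aeK n (((k'+1+1:ℕ):ℤ)+2*j) - aeK n ((k':ℤ)+2*j+2))/2) * (mul_inv_cancel₀ hu)
        rw [Finset.sum_congr rfl key, Finset.sum_sub_distrib, ← Finset.sum_div,
          Finset.sum_add_distrib, ← Finset.mul_sum, ← Finset.mul_sum,
          ← ih k' N hN', ← ih (k'+1) N hN', ← ih (k'+1+1) N hN']
        rfl

end KF2

namespace KFT
open Flow

variable {T : Type*} (t : RootedTree T) (lev : T → ℤ) (hlev : IsLevel t lev)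

include hlev in
lemma lev_iter (x : T) (k : ℕ) : lev (t.pred^[k] x) = lev x + k := by
  induction k with
  | zero => simp
  | succ k ih => rw [Function.iterate_succ_apply', hlev, ih]; push_cast; ring

/-- the set of `k` such that the `k`-th ancestor of `x` is an ancestor of `y`. -/
def K (x y : T) : Set ℕ := {k : ℕ | ∃ l, t.pred^[k] x = t.pred^[l] y}

lemma K_ne (x y : T) : (K t x y).Nonempty := by
  obtain ⟨k, l, h⟩ := t.connected x y; exact ⟨k, l, h⟩

noncomputable def k0 (x y : T) : ℕ := sInf (K t x y)

lemma k0_mem (x y : T) : k0 t x y ∈ K t x y := Nat.sInf_mem (K_ne t x y)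

noncomputable def l0 (x y : T) : ℕ := (k0_mem t x y).choose

lemma k0_l0_spec (x y : T) : t.pred^[k0 t x y] x = t.pred^[l0 t x y] y :=
  (k0_mem t x y).choose_spec

lemma k0_min {x y : T} {k : ℕ} (h : k ∈ K t x y) : k0 t x y ≤ k := Nat.sInf_le h

include hlev in
lemma lev_rel {x y : T} {k l : ℕ} (h : t.pred^[k] x = t.pred^[l] y) :
    lev x + k = lev y + l := by
  have := lev_iter t lev hlev x k
  rw [h, lev_iter t lev hlev y l] at this
  omega

include hlev in
lemma dist_eq (x y : T) : t.dist x y = k0 t x y + l0 t x y := by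
  have hspec := k0_l0_spec t x y
  have h0 : lev x + k0 t x y = lev y + l0 t x y := lev_rel t lev hlev hspec
  refine le_antisymm (Nat.sInf_le ⟨k0 t x y, l0 t x y, rfl, hspec⟩) ?_
  refine le_csInf ⟨k0 t x y + l0 t x y, k0 t x y, l0 t x y, rfl, hspec⟩ ?_
  rintro n ⟨k, l, rfl, h⟩
  have hk : k0 t x y ≤ k := k0_min t ⟨l, h⟩
  have h1 : lev x + k = lev y + l := lev_rel t lev hlev h
  omega

include hlev in
lemma dist_zero_iff (x y : T) : t.dist x y = 0 ↔ x = y := by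
  constructor
  · intro h
    rw [dist_eq t lev hlev] at h
    have hspec := k0_l0_spec t x y
    have h1 : k0 t x y = 0 := by omega
    have h2 : l0 t x y = 0 := by omega
    rw [h1, h2] at hspec
    exact hspec
  · rintro rfl
    have : t.dist x x ≤ 0 := Nat.sInf_le ⟨0, 0, rfl, rfl⟩
    omega

include hlev in
lemma dist_pred_anc {x y : T} (h : ∃ l, t.pred^[l] y = x) :
    t.dist (t.pred x) y = t.dist x y + 1 ∧ k0 t x y = 0 := by
  obtain ⟨l, hl⟩ := h
  have hk0 : k0 t x y = 0 := by
    have : k0 t x y ≤ 0 := k0_min t ⟨l, hl.symm⟩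
    omega
  constructor
  · -- k0 (px) y = 0 with witness l0 x y + 1
    have hspec := k0_l0_spec t x y
    rw [hk0] at hspec
    simp only [Function.iterate_zero_apply] at hspec
    -- hspec : x = p^[l0 x y] y
    have hm : t.pred^[0] (t.pred x) = t.pred^[l0 t x y + 1] y := by
      rw [Function.iterate_zero_apply, Function.iterate_succ_apply']
      exact congrArg t.pred hspec
    have hk0' : k0 t (t.pred x) y = 0 := by
      have : k0 t (t.pred x) y ≤ 0 := k0_min t ⟨l0 t x y + 1, hm⟩
      omega
    have hl0' : lev (t.pred x) + k0 t (t.pred x) y = lev y + l0 t (t.pred x) y :=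
      lev_rel t lev hlev (k0_l0_spec t (t.pred x) y)
    have hl0 : lev x + k0 t x y = lev y + l0 t x y :=
      lev_rel t lev hlev (k0_l0_spec t x y)
    have hpx : lev (t.pred x) = lev x + 1 := hlev x
    rw [dist_eq t lev hlev, dist_eq t lev hlev, hk0, hk0']
    omega
  · exact hk0

include hlev in
lemma dist_pred_not_anc {x y : T} (h : ¬ ∃ l, t.pred^[l] y = x) :
    t.dist (t.pred x) y + 1 = t.dist x y ∧ 1 ≤ k0 t x y := by
  have hk0 : 1 ≤ k0 t x y := by
    rcases Nat.eq_zero_or_pos (k0 t x y) with h0 | h0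
    · exfalso
      have hspec := k0_l0_spec t x y
      rw [h0] at hspec
      exact h ⟨l0 t x y, by rw [← hspec, Function.iterate_zero_apply]⟩
    · omega
  obtain ⟨k', hk'⟩ : ∃ k', k0 t x y = k' + 1 := ⟨k0 t x y - 1, by omega⟩
  have hmem : k' ∈ K t (t.pred x) y := by
    refine ⟨l0 t x y, ?_⟩
    have := k0_l0_spec t x y
    rw [hk', Function.iterate_succ_apply] at this
    exact this
  have hmin : k' ≤ k0 t (t.pred x) y := by
    obtain ⟨l', hl'⟩ := k0_mem t (t.pred x) y
    rw [← Function.iterate_succ_apply t.pred _ x] at hl'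
    have := k0_min t (x := x) (y := y) ⟨l', hl'⟩
    omega
  have hk0' : k0 t (t.pred x) y = k' := le_antisymm (k0_min t hmem) hmin
  have hl0' : lev (t.pred x) + k0 t (t.pred x) y = lev y + l0 t (t.pred x) y :=
    lev_rel t lev hlev (k0_l0_spec t (t.pred x) y)
  have hl0 : lev x + k0 t x y = lev y + l0 t x y :=
    lev_rel t lev hlev (k0_l0_spec t x y)
  have hpx : lev (t.pred x) = lev x + 1 := hlev x
  constructor
  · rw [dist_eq t lev hlev, dist_eq t lev hlev, hk0']
    omega
  · exact hk0

include hlev in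
lemma dist_succ_not_anc {x y z : T} (hz : t.pred z = x) (hnz : ¬ ∃ l, t.pred^[l] y = z) :
    t.dist z y = t.dist x y + 1 := by
  have h := dist_pred_not_anc t lev hlev hnz
  rw [hz] at h
  omega

end KFT


namespace KFO
open Flow KF KF2 KFT

variable {T : Type*} (t : RootedTree T) (lev : T → ℤ) (q : ℕ)

/-- the normalisation factor `q^{(ℓ(y)-ℓ(x))/2}`. -/
noncomputable def rho (y x : T) : ℝ := (q:ℝ) ^ ((((lev y - lev x : ℤ)):ℝ)/2)

variable (hlev : IsLevel t lev)

lemma qR_pos (hq : 0 < q) : (0:ℝ) < (q:ℝ) := by exact_mod_cast hq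

include hlev in
lemma rho_pred (hq : 0 < q) (y x : T) :
    rho lev q y (t.pred x) = (KF2.u q)⁻¹ * rho lev q y x := by
  rw [rho, rho, KF2.u, ← Real.rpow_neg (qR_pos q hq).le, ← Real.rpow_add (qR_pos q hq),
    hlev x]
  congr 1
  push_cast
  ring

lemma rho_succ (hq : 0 < q) {y x z : T} (hz : lev z = lev x - 1) :
    rho lev q y z = KF2.u q * rho lev q y x := by
  rw [rho, rho, KF2.u, ← Real.rpow_add (qR_pos q hq), hz]
  congr 1
  push_cast
  ring

lemma rho_self (y : T) : rho lev q y y = 1 := by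
  rw [rho, sub_self]
  norm_num

lemma uc_sq (hq : 0 < q) : uc q * uc q = (q:ℂ) := by
  rw [uc, u, ← Complex.ofReal_mul, ← Real.rpow_add (qR_pos q hq)]
  norm_num

lemma mcast (x : T) : ((canonicalFlow q lev x : ℝ) : ℂ) = (q:ℂ) ^ (lev x) := by
  rw [canonicalFlow, Complex.ofReal_zpow, Complex.ofReal_natCast]

variable (hhom : IsHomogeneous t q)

include hhom in
lemma card_succ (x : T) : Nat.card {z : T // t.pred z = x} = q := by
  have h2 : Nat.card {z : T // t.pred z = x} = ({z : T | t.pred z = x}).ncard :=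
    Nat.card_coe_set_eq _
  rw [h2, hhom x]

include hlev in
lemma lev_succ {x z : T} (hz : t.pred z = x) : lev z = lev x - 1 := by
  have := hlev z
  rw [hz] at this
  omega

include hlev hhom in
theorem iter_tree (hq : 0 < q) (y : T) (n : ℕ) :
    (lapOp t (canonicalFlow q lev))^[n] (Set.indicator {y} fun _ => (1:ℂ))
    = fun x => ((rho lev q y x : ℝ) : ℂ) * KF2.g q n (t.dist x y) := by
  have hq0 : (q:ℂ) ≠ 0 := by exact_mod_cast hq.ne'
  have hu : uc q ≠ 0 := uc_ne hq
  have huq := uc_sq q hq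
  induction n with
  | zero =>
      funext x
      simp only [Function.iterate_zero_apply]
      by_cases hxy : x = y
      · subst hxy
        have h1 : ({x} : Set T).indicator (fun _ => (1:ℂ)) x = 1 := by simp
        rw [h1, (dist_zero_iff t lev hlev x x).mpr rfl, rho_self]
        show (1:ℂ) = _ * (if 0 = 0 then 1 else 0)
        norm_num
      · have h1 : ({y} : Set T).indicator (fun _ => (1:ℂ)) x = 0 := by simp [hxy]
        rw [h1]
        obtain ⟨d', hd'⟩ : ∃ d', t.dist x y = d' + 1 :=
          ⟨t.dist x y - 1, by
            have := (dist_zero_iff t lev hlev x y).not.mpr hxy -- dist ≠ 0? direction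
            omega⟩
        rw [hd']
        show (0:ℂ) = _ * (if d' + 1 = 0 then 1 else 0)
        norm_num
  | succ n ih =>
      rw [Function.iterate_succ_apply', ih]
      funext x
      set d := t.dist x y with hd
      show (fun x => (((rho lev q y x):ℝ):ℂ) * KF2.g q n (t.dist x y)) x
          - (shiftOp t _ x + shiftStarOp t (canonicalFlow q lev) _ x)/2 = _
      haveI : Fintype {z : T // t.pred z = x} := (t.succ_finite x).fintype
      have hcard : Fintype.card {z : T // t.pred z = x} = q := by
        rw [← Nat.card_eq_fintype_card]
        exact card_succ t q hhom x
      have hlevz : ∀ z : {z : T // t.pred z = x}, lev z.1 = lev x - 1 :=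
        fun z => lev_succ t lev hlev z.2
      have hmz : ∀ z : {z : T // t.pred z = x},
          ((canonicalFlow q lev z.1 : ℝ) : ℂ) = (q:ℂ) ^ (lev x - 1) := by
        intro z
        rw [mcast, hlevz z]
      have hrhoz : ∀ z : {z : T // t.pred z = x},
          rho lev q y z.1 = KF2.u q * rho lev q y x :=
        fun z => rho_succ lev q hq (hlevz z)
      have hstar : shiftStarOp t (canonicalFlow q lev)
            (fun x => (((rho lev q y x):ℝ):ℂ) * KF2.g q n (t.dist x y)) x
          = (q:ℂ)⁻¹ * ∑ z : {z : T // t.pred z = x},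
              (uc q * ((rho lev q y x : ℝ):ℂ) * KF2.g q n (t.dist z.1 y)) := by
        rw [shiftStarOp, mcast, tsum_fintype]
        have hterm : ∀ z : {z : T // t.pred z = x},
            (fun x => (((rho lev q y x):ℝ):ℂ) * KF2.g q n (t.dist x y)) z.1
              * ((canonicalFlow q lev z.1 : ℝ):ℂ)
            = (uc q * ((rho lev q y x : ℝ):ℂ) * KF2.g q n (t.dist z.1 y))
              * (q:ℂ)^(lev x - 1) := by
          intro z
          rw [hmz z]
          show (((rho lev q y z.1):ℝ):ℂ) * KF2.g q n (t.dist z.1 y) * _ = _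
          rw [hrhoz z, uc]
          push_cast
          ring
        rw [Finset.sum_congr rfl (fun z _ => hterm z), ← Finset.sum_mul, zpow_sub_one₀ hq0]
        have h3 : (q:ℂ)^(lev x) ≠ 0 := zpow_ne_zero _ hq0
        field_simp
      by_cases hsa : ∃ l, 1 ≤ l ∧ t.pred^[l] y = x
      · -- x is a strict ancestor of y
        obtain ⟨l, hl1, hl⟩ := hsa
        obtain ⟨l', rfl⟩ : ∃ l', l = l' + 1 := ⟨l - 1, by omega⟩
        set zs : T := t.pred^[l'] y with hzs
        have hpzs : t.pred zs = x := by
          rw [hzs, ← Function.iterate_succ_apply' t.pred l' y, hl]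
        have hanc_zs : ∃ l'', t.pred^[l''] y = zs := ⟨l', rfl⟩
        have hwa : ∃ l'', t.pred^[l''] y = x := ⟨l' + 1, hl⟩
        have hdzs : t.dist (t.pred zs) y = t.dist zs y + 1 :=
          (dist_pred_anc t lev hlev hanc_zs).1
        rw [hpzs] at hdzs
        obtain ⟨d'', hdzs'⟩ : ∃ d'', t.dist zs y = d'' ∧ d = d'' + 1 := ⟨t.dist zs y, rfl, by omega⟩
        have hdx : t.dist (t.pred x) y = d + 1 := (dist_pred_anc t lev hlev hwa).1
        -- uniqueness of zs among successors
        have huniq : ∀ w : {z : T // t.pred z = x}, w.1 ≠ zs → t.dist w.1 y = d + 1 := by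
          intro w hw
          refine dist_succ_not_anc t lev hlev w.2 ?_
          rintro ⟨l'', hl''⟩
          apply hw
          have h1 : lev w.1 = lev y + l'' := by
            have := lev_iter t lev hlev y l''
            rw [hl''] at this
            omega
          have h2 : lev x = lev y + (l' + 1) := by
            have := lev_iter t lev hlev y (l' + 1)
            rw [hl] at this
            omega
          have h3 : lev w.1 = lev x - 1 := lev_succ t lev hlev w.2
          have : l'' = l' := by omega
          rw [← hl'', this]
        -- split the sum
        haveI : DecidableEq {z : T // t.pred z = x} := Classical.decEq _
        have hsum : ∑ z : {z : T // t.pred z = x},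
              (uc q * ((rho lev q y x : ℝ):ℂ) * KF2.g q n (t.dist z.1 y))
            = uc q * ((rho lev q y x : ℝ):ℂ) * KF2.g q n d''
              + ((q:ℕ) - 1 : ℂ) *
                (uc q * ((rho lev q y x : ℝ):ℂ) * KF2.g q n (d + 1)) := by
          rw [← Finset.add_sum_erase Finset.univ _ (Finset.mem_univ (⟨zs, hpzs⟩ : {z : T // t.pred z = x}))]
          congr 1
          · rw [hdzs'.1]
          · rw [Finset.sum_congr rfl (fun w hw => by
              rw [huniq w (by
                have := Finset.ne_of_mem_erase hw
                exact fun hww => this (Subtype.ext hww))]),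
              Finset.sum_const, Finset.card_erase_of_mem (Finset.mem_univ _),
              Finset.card_univ, hcard, nsmul_eq_mul]
            push_cast [Nat.cast_sub (by omega : 1 ≤ q)]
            ring
        rw [hstar, hsum]
        show ((rho lev q y x : ℝ):ℂ) * KF2.g q n d
            - (((rho lev q y (t.pred x) : ℝ):ℂ) * KF2.g q n (t.dist (t.pred x) y) + _)/2 = _
        rw [hdx, rho_pred t lev q hlev hq, hdzs'.2,
          show KF2.g q (n+1) (d''+1) = KF2.g q n (d''+1)
            - ((uc q)⁻¹ * KF2.g q n d'' + uc q * KF2.g q n (d''+1+1))/2 from rfl,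
          ]
        push_cast
        rw [show ((KF2.u q : ℝ):ℂ) = uc q from rfl, ← huq]
        field_simp
        ring
      · -- x is not a strict ancestor of y
        have hnz : ∀ z : {z : T // t.pred z = x}, ¬ ∃ l, t.pred^[l] y = z.1 := by
          rintro z ⟨l, hl⟩
          exact hsa ⟨l + 1, by omega, by rw [Function.iterate_succ_apply', hl, z.2]⟩
        have hallz : ∀ z : {z : T // t.pred z = x}, t.dist z.1 y = d + 1 :=
          fun z => dist_succ_not_anc t lev hlev z.2 (hnz z)
        have hsum : ∑ z : {z : T // t.pred z = x},
              (uc q * ((rho lev q y x : ℝ):ℂ) * KF2.g q n (t.dist z.1 y))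
            = (q:ℂ) * (uc q * ((rho lev q y x : ℝ):ℂ) * KF2.g q n (d + 1)) := by
          rw [Finset.sum_congr rfl (fun z _ => by rw [hallz z]), Finset.sum_const,
            Finset.card_univ, hcard, nsmul_eq_mul]
        rw [hstar, hsum]
        by_cases hwa : ∃ l'', t.pred^[l''] y = x
        · -- then x = y
          have hxy : x = y := by
            obtain ⟨l'', hl''⟩ := hwa
            rcases Nat.eq_zero_or_pos l'' with h0 | h0
            · rw [h0] at hl''; exact hl''.symm
            · exact absurd ⟨l'', by omega, hl''⟩ hsa
          subst hxy
          have hd0 : d = 0 := by rw [hd, (dist_zero_iff t lev hlev x x).mpr rfl]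
          have hdx : t.dist (t.pred x) x = 1 := by
            have h5 := (dist_pred_anc t lev hlev
              (⟨0, Function.iterate_zero_apply t.pred x⟩ : ∃ l, t.pred^[l] x = x)).1
            rw [(dist_zero_iff t lev hlev x x).mpr rfl] at h5
            omega
          show ((rho lev q x x : ℝ):ℂ) * KF2.g q n d
              - (((rho lev q x (t.pred x) : ℝ):ℂ) * KF2.g q n (t.dist (t.pred x) x) + _)/2 = _
          rw [hdx, rho_pred t lev q hlev hq, hd0,
            show KF2.g q (n+1) 0 = KF2.g q n 0 - ((uc q + (uc q)⁻¹)/2) * KF2.g q n 1 from rfl,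
            ]
          push_cast
          rw [show ((KF2.u q : ℝ):ℂ) = uc q from rfl, ← huq]
          norm_num
          field_simp
          ring
        · -- x not an ancestor of y at all
          obtain ⟨d', hd1⟩ : ∃ d', d = d' + 1 := by
            refine ⟨d - 1, ?_⟩
            have : d ≠ 0 := fun h0 => hwa ⟨0, ((dist_zero_iff t lev hlev x y).mp (hd ▸ h0)).symm⟩
            omega
          have hdx : t.dist (t.pred x) y = d' := by
            have := (dist_pred_not_anc t lev hlev hwa).1
            omega
          show ((rho lev q y x : ℝ):ℂ) * KF2.g q n d
              - (((rho lev q y (t.pred x) : ℝ):ℂ) * KF2.g q n (t.dist (t.pred x) y) + _)/2 = _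
          rw [hdx, rho_pred t lev q hlev hq, hd1,
            show KF2.g q (n+1) (d'+1) = KF2.g q n (d'+1)
              - ((uc q)⁻¹ * KF2.g q n d' + uc q * KF2.g q n (d'+1+1))/2 from rfl,
            ]
          push_cast
          rw [show ((KF2.u q : ℝ):ℂ) = uc q from rfl, ← huq]
          field_simp

end KFO

namespace KFZ
open Flow KF KF2

/-- the discrete Laplacian on `ℤ` realised as a flow Laplacian. -/
lemma lapZ (f : ℤ → ℂ) (n : ℤ) :
    lapOp treeZ mZ f n = f n - (f (n+1) + f (n-1))/2 := by
  have hstar : shiftStarOp treeZ mZ f n = f (n-1) := by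
    rw [shiftStarOp]
    have h1 : ∑' y : {y : ℤ // treeZ.pred y = n}, f y.1 * ((mZ y.1 : ℝ):ℂ)
        = f (n-1) * ((mZ (n-1) : ℝ):ℂ) := by
      refine tsum_eq_single (⟨n-1, show (n-1)+1 = n by ring⟩ : {y : ℤ // treeZ.pred y = n})
        (fun b hb => absurd (Subtype.ext (by
          have hb2 : b.1 + 1 = n := b.2
          have : b.1 = n - 1 := by omega
          exact this)) hb)
    rw [h1]
    show ((1:ℝ):ℂ)⁻¹ * (f (n-1) * ((1:ℝ):ℂ)) = f (n-1)
    norm_num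
  have hshift : shiftOp treeZ f n = f (n+1) := rfl
  rw [lapOp]
  show f n - (shiftOp treeZ f n + shiftStarOp treeZ mZ f n)/2 = _
  rw [hstar, hshift]

lemma iterZ (i : ℕ) :
    (lapOp treeZ mZ)^[i] (Set.indicator {0} fun _ => (1:ℂ)) = fun m => aeK i m := by
  induction i with
  | zero =>
      funext m
      simp only [Function.iterate_zero_apply, Set.indicator_apply, Set.mem_singleton_iff]
      rw [KF2.ae_zero]
  | succ i ih =>
      funext m
      rw [Function.iterate_succ_apply', ih, lapZ, KF.ae_rec]
      show aeK i m - ((fun m => aeK i m) (m+1) + (fun m => aeK i m) (m-1))/2 = _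
      ring

lemma polyZ (P : Polynomial ℂ) (m : ℤ) :
    polyApply (lapOp treeZ mZ) P (Set.indicator {0} fun _ => (1:ℂ)) m
    = ∑ i ∈ Finset.range (P.natDegree + 1), P.coeff i * aeK i m := by
  rw [polyApply]
  exact Finset.sum_congr rfl fun i _ => by rw [iterZ i]

end KFZ

namespace KFF
open KF KF2 intervalIntegral

/-- `(2π)⁻¹ ∫_{-π}^{π} (1-cos θ)^n cos(kθ) dθ`. -/
noncomputable def aInt (n k : ℕ) : ℝ :=
  (2*Real.pi)⁻¹ * ∫ θ in (-Real.pi)..Real.pi, (1 - Real.cos θ)^n * Real.cos (k*θ)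

lemma cont_integrand (n : ℕ) (c : ℝ) :
    Continuous fun θ : ℝ => (1 - Real.cos θ)^n * Real.cos (c*θ) := by
  fun_prop

lemma intgbl (n : ℕ) (c : ℝ) :
    IntervalIntegrable (fun θ : ℝ => (1 - Real.cos θ)^n * Real.cos (c*θ))
      MeasureTheory.volume (-Real.pi) Real.pi :=
  (cont_integrand n c).intervalIntegrable _ _

lemma integral_cos_nat (c : ℝ) (hc : c ≠ 0) :
    ∫ θ in (-Real.pi)..Real.pi, Real.cos (c*θ) = c⁻¹ * (Real.sin (c*Real.pi) - Real.sin (c*(-Real.pi))) := by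
  rw [intervalIntegral.integral_comp_mul_left (fun x => Real.cos x) hc, integral_cos,
    smul_eq_mul]

lemma aInt_zero (k : ℕ) : aInt 0 k = if k = 0 then 1 else 0 := by
  rcases Nat.eq_zero_or_pos k with hk | hk
  · subst hk
    rw [aInt, if_pos rfl]
    simp only [pow_zero, Nat.cast_zero, zero_mul, Real.cos_zero, one_mul]
    rw [intervalIntegral.integral_const, smul_eq_mul]
    have hpi : Real.pi ≠ 0 := Real.pi_ne_zero
    field_simp
    ring
  · rw [aInt, if_neg (by omega)]
    have h1 : ∀ θ : ℝ, (1 - Real.cos θ)^0 * Real.cos (k*θ) = Real.cos ((k:ℝ)*θ) := by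
      intro θ; rw [pow_zero, one_mul]
    rw [intervalIntegral.integral_congr (g := fun θ => Real.cos ((k:ℝ)*θ)) (fun θ _ => h1 θ)]
    rw [integral_cos_nat (k:ℝ) (by positivity)]
    have h2 : Real.sin ((k:ℝ)*Real.pi) = 0 := Real.sin_nat_mul_pi k
    have h3 : Real.sin ((k:ℝ)*(-Real.pi)) = 0 := by
      rw [mul_neg, Real.sin_neg, h2, neg_zero]
    rw [h2, h3]
    ring

lemma cos_id (k : ℕ) (θ : ℝ) :
    Real.cos θ * Real.cos (((k:ℝ)+1)*θ)
      = (Real.cos (((k:ℝ)+2)*θ) + Real.cos ((k:ℝ)*θ))/2 := by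
  rw [show ((k:ℝ)+2)*θ = ((k:ℝ)+1)*θ + θ by ring,
    show (k:ℝ)*θ = ((k:ℝ)+1)*θ - θ by ring, Real.cos_add, Real.cos_sub]
  ring

lemma aInt_rec_zero (n : ℕ) : aInt (n+1) 0 = aInt n 0 - aInt n 1 := by
  rw [aInt, aInt, aInt]
  have h1 : ∀ θ ∈ Set.uIcc (-Real.pi) Real.pi,
      (1 - Real.cos θ)^(n+1) * Real.cos ((0:ℕ)*θ)
      = (1 - Real.cos θ)^n * Real.cos ((0:ℕ)*θ) - (1 - Real.cos θ)^n * Real.cos ((1:ℕ)*θ) := by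
    intro θ _
    push_cast
    simp only [zero_mul, Real.cos_zero, one_mul]
    ring
  rw [intervalIntegral.integral_congr h1, intervalIntegral.integral_sub (intgbl n ((0:ℕ):ℝ)) (intgbl n ((1:ℕ):ℝ))]
  push_cast
  ring

lemma aInt_rec_succ (n k : ℕ) :
    aInt (n+1) (k+1) = aInt n (k+1) - (aInt n k + aInt n (k+2))/2 := by
  rw [aInt, aInt, aInt, aInt]
  have h1 : ∀ θ ∈ Set.uIcc (-Real.pi) Real.pi,
      (1 - Real.cos θ)^(n+1) * Real.cos (((k+1:ℕ):ℝ)*θ)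
      = (1 - Real.cos θ)^n * Real.cos (((k+1:ℕ):ℝ)*θ)
        - ((1 - Real.cos θ)^n * Real.cos ((k:ℝ)*θ)
           + (1 - Real.cos θ)^n * Real.cos (((k+2:ℕ):ℝ)*θ))/2 := by
    intro θ _
    have := cos_id k θ
    push_cast
    linear_combination (-(1 - Real.cos θ)^n) * this
  rw [intervalIntegral.integral_congr h1,
    intervalIntegral.integral_sub (intgbl n ((k+1:ℕ):ℝ)) (by
      apply IntervalIntegrable.div_const
      exact ((intgbl n ((k:ℕ):ℝ)).add (intgbl n ((k+2:ℕ):ℝ)))),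
    intervalIntegral.integral_div,
    intervalIntegral.integral_add (intgbl n ((k:ℕ):ℝ)) (intgbl n ((k+2:ℕ):ℝ))]
  push_cast
  ring

/-- the Fourier formula for the kernel of `Δ_ℤ^n`. -/
lemma a_eq_aInt (n k : ℕ) : a n k = ((aInt n k : ℝ) : ℂ) := by
  induction n generalizing k with
  | zero => rw [aInt_zero]; rcases Nat.eq_zero_or_pos k with hk | hk
            · subst hk; norm_num; rfl
            · rw [if_neg (by omega)]
              show (if k = 0 then (1:ℂ) else 0) = _
              rw [if_neg (by omega)]
              norm_num
  | succ n ih =>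
      rcases k with _ | k'
      · show a n 0 - a n 1 = _
        rw [ih 0, ih 1, aInt_rec_zero]
        push_cast
        ring
      · show a n (k'+1) - (a n k' + a n (k'+2))/2 = _
        rw [ih k', ih (k'+1), ih (k'+2), aInt_rec_succ]
        push_cast
        ring

end KFF

namespace KFP
open KF KF2 KFF Polynomial intervalIntegral

/-- `∑_i coeff_i Δ_ℤ^i`-kernel at distance `k`. -/
noncomputable def sumA (P : Polynomial ℂ) (k : ℕ) : ℂ :=
  ∑ i ∈ Finset.range (P.natDegree+1), P.coeff i * a i k

noncomputable def sumAe (P : Polynomial ℂ) (m : ℤ) : ℂ :=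
  ∑ i ∈ Finset.range (P.natDegree+1), P.coeff i * aeK i m

lemma sumAe_eq (P : Polynomial ℂ) (m : ℤ) : sumAe P m = sumA P m.natAbs := rfl

/-- `(2π)⁻¹ ∫ P(1-cos θ) cos(kθ)`. -/
noncomputable def pI (P : Polynomial ℂ) (k : ℕ) : ℂ :=
  (2*Real.pi : ℝ)⁻¹ •
    ∫ θ in (-Real.pi)..Real.pi, P.eval (1 - (Real.cos θ:ℂ)) * ((Real.cos (k*θ) : ℝ) : ℂ)

lemma contC (i : ℕ) (c : ℝ) :
    Continuous fun θ : ℝ => ((1:ℂ) - (Real.cos θ:ℂ))^i * ((Real.cos (c*θ) : ℝ):ℂ) := by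
  fun_prop

lemma sumA_eq_pI (P : Polynomial ℂ) (k : ℕ) : sumA P k = pI P k := by
  have heval : ∀ θ : ℝ, P.eval (1 - (Real.cos θ:ℂ)) * ((Real.cos (k*θ):ℝ):ℂ)
      = ∑ i ∈ Finset.range (P.natDegree+1),
          P.coeff i * (((1:ℂ) - (Real.cos θ:ℂ))^i * ((Real.cos (k*θ):ℝ):ℂ)) := by
    intro θ
    rw [Polynomial.eval_eq_sum_range, Finset.sum_mul]
    congr 1
    ext i
    ring
  rw [pI, intervalIntegral.integral_congr (g := fun θ =>
      ∑ i ∈ Finset.range (P.natDegree+1),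
        P.coeff i * (((1:ℂ) - (Real.cos θ:ℂ))^i * ((Real.cos (k*θ):ℝ):ℂ)))
      (fun θ _ => heval θ),
    intervalIntegral.integral_finset_sum (f := fun i θ =>
        P.coeff i * (((1:ℂ) - (Real.cos θ:ℂ))^i * ((Real.cos ((k:ℝ)*θ):ℝ):ℂ))) (fun i _ =>
      ((continuous_const.mul (contC i (k:ℝ))).intervalIntegrable _ _))]
  rw [Finset.smul_sum, sumA]
  refine Finset.sum_congr rfl fun i _ => ?_
  rw [a_eq_aInt, intervalIntegral.integral_const_mul]
  have hcast : ∀ θ : ℝ, ((1:ℂ) - (Real.cos θ:ℂ))^i * ((Real.cos ((k:ℝ)*θ):ℝ):ℂ)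
      = (((1 - Real.cos θ)^i * Real.cos ((k:ℝ)*θ) : ℝ) : ℂ) := by
    intro θ; push_cast; ring
  rw [intervalIntegral.integral_congr (g := fun θ =>
      (((1 - Real.cos θ)^i * Real.cos ((k:ℝ)*θ) : ℝ) : ℂ)) (fun θ _ => hcast θ),
    intervalIntegral.integral_ofReal]
  rw [aInt, Complex.real_smul]
  push_cast
  ring

lemma pI_bound (P : Polynomial ℂ) (C : ℝ)
    (hC : ∀ lam : ℝ, lam ∈ Set.Icc (0:ℝ) 2 → ‖P.eval (lam:ℂ)‖ ≤ C) (k : ℕ) :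
    ‖pI P k‖ ≤ C := by
  have hC0 : 0 ≤ C := le_trans (norm_nonneg _) (hC 0 ⟨le_refl _, by norm_num⟩)
  have hpi : (0:ℝ) < Real.pi := Real.pi_pos
  have hbd : ∀ θ ∈ Set.uIoc (-Real.pi) Real.pi,
      ‖P.eval (1 - (Real.cos θ:ℂ)) * ((Real.cos (k*θ):ℝ):ℂ)‖ ≤ C := by
    intro θ _
    rw [norm_mul]
    have h1 : ‖P.eval (1 - (Real.cos θ:ℂ))‖ ≤ C := by
      have harg : (1:ℂ) - (Real.cos θ:ℂ) = ((1 - Real.cos θ : ℝ):ℂ) := by push_cast; ring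
      rw [harg]
      exact hC _ ⟨by nlinarith [Real.cos_le_one θ], by nlinarith [Real.neg_one_le_cos θ]⟩
    have h2 : ‖((Real.cos (k*θ):ℝ):ℂ)‖ ≤ 1 := by
      rw [Complex.norm_real, Real.norm_eq_abs]
      exact Real.abs_cos_le_one _
    calc ‖P.eval (1 - (Real.cos θ:ℂ))‖ * ‖((Real.cos (k*θ):ℝ):ℂ)‖
        ≤ C * 1 := mul_le_mul h1 h2 (norm_nonneg _) hC0
      _ = C := mul_one C
  have hnorm := intervalIntegral.norm_integral_le_of_norm_le_const hbd
  rw [pI, norm_smul, Real.norm_eq_abs, abs_of_pos (by positivity)]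
  calc (2*Real.pi)⁻¹ * ‖∫ θ in (-Real.pi)..Real.pi,
          P.eval (1 - (Real.cos θ:ℂ)) * ((Real.cos (k*θ):ℝ):ℂ)‖
      ≤ (2*Real.pi)⁻¹ * (C * |Real.pi - (-Real.pi)|) := by
        apply mul_le_mul_of_nonneg_left hnorm (by positivity)
    _ = C := by
        rw [abs_of_pos (by linarith), show Real.pi - -Real.pi = 2*Real.pi by ring]
        rw [← mul_assoc, mul_comm ((2*Real.pi)⁻¹) C, mul_assoc,
          inv_mul_cancel₀ (by positivity), mul_one]

lemma pI_sub (P P' : Polynomial ℂ) (k : ℕ) : pI (P - P') k = pI P k - pI P' k := by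
  rw [pI, pI, pI, ← smul_sub]
  congr 1
  have c1 : Continuous fun θ : ℝ => P.eval (1 - (Real.cos θ:ℂ)) :=
    (Polynomial.continuous P).comp (by fun_prop)
  have c1' : Continuous fun θ : ℝ => P'.eval (1 - (Real.cos θ:ℂ)) :=
    (Polynomial.continuous P').comp (by fun_prop)
  have c2 : Continuous fun θ : ℝ => ((Real.cos ((k:ℝ)*θ):ℝ):ℂ) := by fun_prop
  rw [← intervalIntegral.integral_sub
    (f := fun θ : ℝ => P.eval (1 - (Real.cos θ:ℂ)) * ((Real.cos ((k:ℝ)*θ):ℝ):ℂ))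
    (g := fun θ : ℝ => P'.eval (1 - (Real.cos θ:ℂ)) * ((Real.cos ((k:ℝ)*θ):ℝ):ℂ))
    ((c1.mul c2).intervalIntegrable _ _)
    ((c1'.mul c2).intervalIntegrable _ _)]
  apply intervalIntegral.integral_congr
  intro θ _
  simp only [Polynomial.eval_sub]
  ring

end KFP

namespace KFL
open Flow

variable {T : Type*}

lemma lpNorm_two (m : T → ℝ) (f : T → ℂ) :
    lpNorm m 2 f = (∑' x, (‖f x‖₊:ℝ≥0∞)^(2:ℝ) * ENNReal.ofReal (m x)) ^ (1/2:ℝ) := by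
  rw [Flow.lpNorm, if_neg (by simp)]
  norm_num

lemma pointwise_le (m : T → ℝ) (f : T → ℂ) (x : T) :
    (‖f x‖₊ : ℝ≥0∞) * ENNReal.ofReal (m x) ^ (1/2:ℝ) ≤ lpNorm m 2 f := by
  rw [lpNorm_two]
  have h1 : (‖f x‖₊:ℝ≥0∞)^(2:ℝ) * ENNReal.ofReal (m x)
      ≤ ∑' x, (‖f x‖₊:ℝ≥0∞)^(2:ℝ) * ENNReal.ofReal (m x) := ENNReal.le_tsum x
  have h2 := ENNReal.rpow_le_rpow h1 (by norm_num : (0:ℝ) ≤ 1/2)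
  refine le_trans (le_of_eq ?_) h2
  rw [ENNReal.mul_rpow_of_nonneg _ _ (by norm_num : (0:ℝ) ≤ 1/2), ← ENNReal.rpow_mul]
  norm_num

lemma lpNorm_indicator (m : T → ℝ) (y : T) :
    lpNorm m 2 (Set.indicator {y} fun _ => (1:ℂ)) = ENNReal.ofReal (m y) ^ (1/2:ℝ) := by
  rw [lpNorm_two]
  congr 1
  rw [tsum_eq_single y]
  · have h5 : ({y} : Set T).indicator (fun _ => (1:ℂ)) y = 1 := by simp
    rw [h5]
    norm_num
  · intro b hb
    rw [Set.indicator_of_notMem (by simpa using hb)]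
    rw [nnnorm_zero]
    rw [ENNReal.coe_zero, ENNReal.zero_rpow_of_pos (by norm_num), zero_mul]

lemma lpNorm_indicator_lt_top (m : T → ℝ) (y : T) :
    lpNorm m 2 (Set.indicator {y} fun _ => (1:ℂ)) < ⊤ := by
  rw [lpNorm_indicator]
  exact ENNReal.rpow_lt_top_of_nonneg (by norm_num) ENNReal.ofReal_ne_top

lemma conv_real {εr my mx : ℝ} {z : ℂ} (hmx : 0 < mx) (hmy : 0 ≤ my) (hε : 0 ≤ εr)
    (h : (‖z‖₊ : ℝ≥0∞) * ENNReal.ofReal mx ^ (1/2:ℝ)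
      ≤ ENNReal.ofReal εr * ENNReal.ofReal my ^ (1/2:ℝ)) :
    ‖z‖ ≤ εr * Real.sqrt my / Real.sqrt mx := by
  rw [ENNReal.ofReal_rpow_of_nonneg hmx.le (by norm_num : (0:ℝ) ≤ 1/2),
    ENNReal.ofReal_rpow_of_nonneg hmy (by norm_num : (0:ℝ) ≤ 1/2),
    ← (ofReal_norm z).trans (enorm_eq_nnnorm z),
    ← ENNReal.ofReal_mul (norm_nonneg z), ← ENNReal.ofReal_mul hε] at h
  have h2 := (ENNReal.ofReal_le_ofReal_iff (by positivity)).mp h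
  rw [← Real.sqrt_eq_rpow, ← Real.sqrt_eq_rpow] at h2
  have hsq : 0 < Real.sqrt mx := Real.sqrt_pos.mpr hmx
  rw [le_div_iff₀ hsq]
  exact h2

end KFL

/-- Kernel formula on the homogeneous tree `T_q` (`q ≥ 2`): for
`F ∈ C([0,2])` and all `x, y ∈ T_q`,
`K_{F(𝓛_{T_q})}(x,y) = q^{-(ℓ(x)+ℓ(y))/2} E_F(d(x,y))`, where
`E_F(k) = Σ_{j≥0} q^{-(k+2j)/2} (k_{F(Δ_ℤ)}(k+2j) - k_{F(Δ_ℤ)}(k+2j+2))`,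
the series converging absolutely; here `Δ_ℤ` is realised as the flow Laplacian of the
flow tree `(ℤ, 1)` and `k_{F(Δ_ℤ)} = F(Δ_ℤ)δ₀`. -/
theorem homogeneous_tree_kernel_formula {Tq : Type*} [Nonempty Tq]
    (q : ℕ) (hq : 2 ≤ q)
    (tq : Flow.RootedTree Tq) (hhom : Flow.IsHomogeneous tq q)
    (lev : Tq → ℤ) (hlev : Flow.IsLevel tq lev)
    (F : ℝ → ℂ) (hF : ContinuousOn F (Set.Icc (0 : ℝ) 2))
    (B : (Tq → ℂ) → (Tq → ℂ))
    (hB : Flow.IsCfcOf (Flow.canonicalFlow q lev)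
      (Flow.lapOp tq (Flow.canonicalFlow q lev)) F B)
    (BZ : (ℤ → ℂ) → (ℤ → ℂ))
    (hBZ : Flow.IsCfcOf Flow.mZ (Flow.lapOp Flow.treeZ Flow.mZ) F BZ) :
    ∀ x y : Tq,
      Summable (fun j : ℕ =>
        ((q : ℝ) ^ (-(((tq.dist x y : ℝ) + 2 * (j : ℝ)) / 2)) : ℝ) •
          (Flow.kZker BZ ((tq.dist x y : ℤ) + 2 * (j : ℤ))
            - Flow.kZker BZ ((tq.dist x y : ℤ) + 2 * (j : ℤ) + 2))) ∧
      Flow.opKernel (Flow.canonicalFlow q lev) B x y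
        = ((q : ℝ) ^ (-((((lev x + lev y : ℤ) : ℝ)) / 2)) : ℝ) •
          ∑' j : ℕ,
            ((q : ℝ) ^ (-(((tq.dist x y : ℝ) + 2 * (j : ℝ)) / 2)) : ℝ) •
              (Flow.kZker BZ ((tq.dist x y : ℤ) + 2 * (j : ℤ))
                - Flow.kZker BZ ((tq.dist x y : ℤ) + 2 * (j : ℤ) + 2)) := by
  intro x y
  have hq0 : 0 < q := by omega
  have hqR0 : (0:ℝ) < (q:ℝ) := by exact_mod_cast hq0
  have hqR1 : (1:ℝ) ≤ (q:ℝ) := by exact_mod_cast (by omega : 1 ≤ q)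
  have hqR2 : (2:ℝ) ≤ (q:ℝ) := by exact_mod_cast hq
  set M := Flow.canonicalFlow q lev with hM
  set d : ℕ := tq.dist x y with hd
  set one_y : Tq → ℂ := Set.indicator {y} (fun _ => (1:ℂ)) with h1y
  set dZ : ℤ → ℂ := Set.indicator {0} (fun _ => (1:ℂ)) with hdZ
  -- geometric bounds on the weights
  have hWpos : ∀ j : ℕ, 0 ≤ KF2.W q d j := fun j => Real.rpow_nonneg hqR0.le _
  have hWle : ∀ j : ℕ, KF2.W q d j ≤ (2⁻¹:ℝ)^j := by
    intro j
    have h1 : KF2.W q d j ≤ (q:ℝ) ^ (-(j:ℝ)) := by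
      rw [KF2.W]
      apply Real.rpow_le_rpow_of_exponent_le hqR1
      have hd0 : (0:ℝ) ≤ (d:ℝ) := Nat.cast_nonneg d
      linarith
    have h2 : (q:ℝ)^(-(j:ℝ)) = ((q:ℝ)⁻¹)^j := by
      rw [Real.rpow_neg hqR0.le, Real.rpow_natCast, inv_pow]
    rw [h2] at h1
    refine le_trans h1 (pow_le_pow_left₀ (by positivity) ?_ j)
    exact inv_anti₀ (by norm_num) hqR2
  obtain ⟨CF, hCF⟩ := isCompact_Icc.exists_bound_of_continuousOn hF
  have hCF0 : 0 ≤ CF := le_trans (norm_nonneg _) (hCF 0 (by norm_num))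
  -- choose approximating polynomials
  choose P hP1 hP2 using fun n : ℕ => hB ((n:ℝ)+1)⁻¹ (by positivity)
  choose P' hP'1 hP'2 using fun n : ℕ => hBZ ((n:ℝ)+1)⁻¹ (by positivity)
  set ε : ℕ → ℝ := fun n => ((n:ℝ)+1)⁻¹ with hε
  have hεpos : ∀ n, 0 < ε n := fun n => by positivity
  have hεlim : Filter.Tendsto ε Filter.atTop (nhds 0) := by
    have h0 := tendsto_one_div_add_atTop_nhds_zero_nat (𝕜 := ℝ)
    simpa [hε, one_div] using h0
  -- L² facts on ℤ
  have hδval : Flow.lpNorm Flow.mZ 2 dZ = 1 := by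
    rw [hdZ, KFL.lpNorm_indicator]
    show ENNReal.ofReal 1 ^ (1/2:ℝ) = 1
    simp
  have hδlt : Flow.lpNorm Flow.mZ 2 dZ < ⊤ := by rw [hδval]; exact ENNReal.one_lt_top
  have hZpt : ∀ n (s : ℤ), ‖Flow.kZker BZ s - KFP.sumAe (P' n) s‖ ≤ ε n := by
    intro n s
    have h1 := hP'2 n dZ hδlt
    rw [hδval, mul_one] at h1
    have h2 := KFL.pointwise_le Flow.mZ
      (fun s => BZ dZ s - Flow.polyApply (Flow.lapOp Flow.treeZ Flow.mZ) (P' n) dZ s) s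
    have h3 : ENNReal.ofReal (Flow.mZ s) ^ (1/2:ℝ) = 1 := by
      show ENNReal.ofReal 1 ^ (1/2:ℝ) = 1
      simp
    rw [h3, mul_one] at h2
    have h4 := le_trans h2 h1
    rw [← (ofReal_norm _).trans (enorm_eq_nnnorm _)] at h4
    have h5 := (ENNReal.ofReal_le_ofReal_iff (hεpos n).le).mp h4
    have h6 : Flow.polyApply (Flow.lapOp Flow.treeZ Flow.mZ) (P' n) dZ s
        = KFP.sumAe (P' n) s := by
      rw [hdZ]
      exact KFZ.polyZ (P' n) s
    have h7 : Flow.kZker BZ s = BZ dZ s := by rw [Flow.kZker, hdZ]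
    rw [h7, ← h6]
    exact h5
  -- Fourier comparison of the two polynomial sequences
  have hsumA_diff : ∀ n (k : ℕ), ‖KFP.sumA (P n) k - KFP.sumA (P' n) k‖ ≤ 2 * ε n := by
    intro n k
    rw [KFP.sumA_eq_pI, KFP.sumA_eq_pI, ← KFP.pI_sub]
    refine KFP.pI_bound _ _ ?_ k
    intro lam hlam
    rw [Polynomial.eval_sub]
    have h3 : (P n).eval (lam:ℂ) - (P' n).eval (lam:ℂ)
        = -(F lam - (P n).eval (lam:ℂ)) + (F lam - (P' n).eval (lam:ℂ)) := by ring
    rw [h3]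
    refine le_trans (norm_add_le _ _) ?_
    rw [norm_neg]
    have := hP1 n lam hlam
    have := hP'1 n lam hlam
    have hεε : ((n:ℝ)+1)⁻¹ = ε n := rfl
    linarith
  have hK0 : ∀ s : ℤ, ‖Flow.kZker BZ s‖ ≤ CF + 2 := by
    intro s
    have h1 := hZpt 0 s
    have h2 : ‖KFP.sumAe (P' 0) s‖ ≤ CF + 1 := by
      rw [KFP.sumAe_eq, KFP.sumA_eq_pI]
      refine KFP.pI_bound _ _ ?_ _
      intro lam hlam
      have h3 := hP'1 0 lam hlam
      have h4 := hCF lam hlam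
      have h5 : (P' 0).eval (lam:ℂ) = F lam - (F lam - (P' 0).eval (lam:ℂ)) := by ring
      rw [h5]
      refine le_trans (norm_sub_le _ _) ?_
      have h6 : ((0:ℕ):ℝ) + 1 = 1 := by norm_num
      rw [h6, inv_one] at h3
      linarith
    have h8 : Flow.kZker BZ s
        = (Flow.kZker BZ s - KFP.sumAe (P' 0) s) + KFP.sumAe (P' 0) s := by ring
    rw [h8]
    refine le_trans (norm_add_le _ _) ?_
    have h9 : ε 0 = 1 := by norm_num [hε]
    rw [h9] at h1
    linarith
  have hUnif : ∀ n (s : ℤ), ‖Flow.kZker BZ s - KFP.sumAe (P n) s‖ ≤ 3 * ε n := by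
    intro n s
    have h1 := hZpt n s
    have h2 := hsumA_diff n s.natAbs
    rw [← KFP.sumAe_eq, ← KFP.sumAe_eq] at h2
    have h3 : Flow.kZker BZ s - KFP.sumAe (P n) s
        = (Flow.kZker BZ s - KFP.sumAe (P' n) s)
          + (KFP.sumAe (P' n) s - KFP.sumAe (P n) s) := by ring
    rw [h3]
    refine le_trans (norm_add_le _ _) ?_
    rw [norm_sub_rev] at h2
    linarith
  -- the limit series
  set v : ℕ → ℂ := fun j : ℕ =>
    ((q : ℝ) ^ (-(((d : ℝ) + 2 * (j : ℝ)) / 2)) : ℝ) •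
      (Flow.kZker BZ ((d : ℤ) + 2 * (j : ℤ)) - Flow.kZker BZ ((d : ℤ) + 2 * (j : ℤ) + 2))
    with hv
  have hvW : ∀ j : ℕ, v j = (KF2.W q d j) •
      (Flow.kZker BZ ((d : ℤ) + 2 * (j : ℤ)) - Flow.kZker BZ ((d : ℤ) + 2 * (j : ℤ) + 2)) :=
    fun j => rfl
  have hvnorm : ∀ j, ‖v j‖ ≤ (2⁻¹:ℝ)^j * (2*CF + 4) := by
    intro j
    rw [hvW j, norm_smul, Real.norm_eq_abs, abs_of_nonneg (hWpos j)]
    have h1 : ‖Flow.kZker BZ ((d : ℤ) + 2*(j:ℤ)) - Flow.kZker BZ ((d : ℤ) + 2*(j:ℤ) + 2)‖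
        ≤ 2*CF + 4 := by
      refine le_trans (norm_sub_le _ _) ?_
      have := hK0 ((d : ℤ) + 2*(j:ℤ))
      have := hK0 ((d : ℤ) + 2*(j:ℤ) + 2)
      linarith
    exact mul_le_mul (hWle j) h1 (norm_nonneg _) (by positivity)
  have hgeo : Summable (fun j : ℕ => (2⁻¹:ℝ)^j * (2*CF+4)) :=
    (summable_geometric_of_lt_one (by norm_num) (by norm_num)).mul_right _
  have hsumv : Summable v := Summable.of_norm_bounded hgeo hvnorm
  -- the polynomial series
  set w : ℕ → ℕ → ℂ := fun n j => KF2.Wc q d j *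
    (KFP.sumAe (P n) ((d:ℤ) + 2*(j:ℤ)) - KFP.sumAe (P n) ((d:ℤ) + 2*(j:ℤ) + 2)) with hw
  have hsA0 : ∀ n (s : ℤ), ((P n).natDegree : ℤ) < s → KFP.sumAe (P n) s = 0 := by
    intro n s hs
    refine Finset.sum_eq_zero fun i hi => ?_
    have hi' : i ≤ (P n).natDegree := by
      have := Finset.mem_range.mp hi
      omega
    rw [KF.ae_support i s (by omega), mul_zero]
  have hw0 : ∀ n, ∀ j ∉ Finset.range ((P n).natDegree + 1), w n j = 0 := by
    intro n j hj
    rw [Finset.mem_range, not_lt] at hj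
    show KF2.Wc q d j * (KFP.sumAe (P n) ((d:ℤ) + 2*(j:ℤ))
      - KFP.sumAe (P n) ((d:ℤ) + 2*(j:ℤ) + 2)) = 0
    rw [hsA0 n _ (by omega), hsA0 n _ (by omega), sub_zero, mul_zero]
  have hsw : ∀ n, Summable (w n) := fun n => summable_of_ne_finset_zero (hw0 n)
  -- kernel of the polynomial operator
  have hiter := KFO.iter_tree tq lev q hlev hhom hq0 y
  have hpoly : ∀ n, Flow.polyApply (Flow.lapOp tq M) (P n) one_y x
      = ((KFO.rho lev q y x : ℝ) : ℂ) * ∑ j ∈ Finset.range ((P n).natDegree + 1), w n j := by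
    intro n
    have hstep1 : Flow.polyApply (Flow.lapOp tq M) (P n) one_y x
        = ((KFO.rho lev q y x : ℝ) : ℂ)
          * ∑ i ∈ Finset.range ((P n).natDegree + 1), (P n).coeff i * KF2.g q i d := by
      rw [Flow.polyApply, Finset.mul_sum]
      refine Finset.sum_congr rfl fun i _ => ?_
      rw [hM, h1y, hiter i]
      ring
    rw [hstep1]
    congr 1
    have hgchain : ∀ i ∈ Finset.range ((P n).natDegree + 1),
        (P n).coeff i * KF2.g q i d
        = ∑ j ∈ Finset.range ((P n).natDegree + 1),
            (P n).coeff i * (KF2.Wc q d j *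
              (KF.aeK i ((d:ℤ) + 2*(j:ℤ)) - KF.aeK i ((d:ℤ) + 2*(j:ℤ) + 2))) := by
      intro i hi
      rw [KF2.g_eq hq0 i d ((P n).natDegree + 1) (Finset.mem_range.mp hi), Finset.mul_sum]
    rw [Finset.sum_congr rfl hgchain, Finset.sum_comm]
    refine Finset.sum_congr rfl fun j _ => ?_
    show _ = KF2.Wc q d j * (KFP.sumAe (P n) ((d:ℤ) + 2*(j:ℤ))
      - KFP.sumAe (P n) ((d:ℤ) + 2*(j:ℤ) + 2))
    rw [KFP.sumAe, KFP.sumAe, ← Finset.sum_sub_distrib, Finset.mul_sum]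
    refine Finset.sum_congr rfl fun i _ => ?_
    ring
  have hSn_tsum : ∀ n, ∑ j ∈ Finset.range ((P n).natDegree + 1), w n j = ∑' j, w n j :=
    fun n => (tsum_eq_sum (hw0 n)).symm
  -- comparison of the two series
  have hvw : ∀ n j, ‖v j - w n j‖ ≤ (2⁻¹:ℝ)^j * (6 * ε n) := by
    intro n j
    have h1 : v j - w n j = ((KF2.W q d j : ℝ):ℂ) *
        ((Flow.kZker BZ ((d:ℤ) + 2*(j:ℤ)) - KFP.sumAe (P n) ((d:ℤ) + 2*(j:ℤ)))
         - (Flow.kZker BZ ((d:ℤ) + 2*(j:ℤ) + 2) - KFP.sumAe (P n) ((d:ℤ) + 2*(j:ℤ) + 2))) := by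
      rw [hvW j, Complex.real_smul]
      show _ - KF2.Wc q d j * _ = _
      rw [KF2.Wc]
      ring
    rw [h1, norm_mul, Complex.norm_real, Real.norm_eq_abs, abs_of_nonneg (hWpos j)]
    have h2 : ‖(Flow.kZker BZ ((d:ℤ) + 2*(j:ℤ)) - KFP.sumAe (P n) ((d:ℤ) + 2*(j:ℤ)))
         - (Flow.kZker BZ ((d:ℤ) + 2*(j:ℤ) + 2) - KFP.sumAe (P n) ((d:ℤ) + 2*(j:ℤ) + 2))‖
        ≤ 6 * ε n := by
      refine le_trans (norm_sub_le _ _) ?_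
      have := hUnif n ((d:ℤ) + 2*(j:ℤ))
      have := hUnif n ((d:ℤ) + 2*(j:ℤ) + 2)
      linarith
    exact mul_le_mul (hWle j) h2 (norm_nonneg _) (by positivity)
  have hgeo2 : ∀ c : ℝ, Summable (fun j : ℕ => (2⁻¹:ℝ)^j * c) :=
    fun c => (summable_geometric_of_lt_one (by norm_num) (by norm_num)).mul_right _
  have hST : ∀ n, ‖(∑' j, v j) - ∑' j, w n j‖ ≤ 12 * ε n := by
    intro n
    rw [← Summable.tsum_sub hsumv (hsw n)]
    have hns : Summable fun j => ‖v j - w n j‖ :=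
      Summable.of_nonneg_of_le (fun j => norm_nonneg _) (hvw n) (hgeo2 _)
    calc ‖∑' j, (v j - w n j)‖ ≤ ∑' j, ‖v j - w n j‖ := norm_tsum_le_tsum_norm hns
      _ ≤ ∑' j : ℕ, (2⁻¹:ℝ)^j * (6 * ε n) := Summable.tsum_le_tsum (hvw n) hns (hgeo2 _)
      _ = (∑' j : ℕ, (2⁻¹:ℝ)^j) * (6 * ε n) := tsum_mul_right
      _ = 12 * ε n := by
          rw [tsum_geometric_of_lt_one (by norm_num) (by norm_num)]
          norm_num
          ring
  -- pointwise control on the tree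
  have hMx : 0 < M x := by
    rw [hM]
    exact zpow_pos hqR0 _
  have hMy : 0 < M y := by
    rw [hM]
    exact zpow_pos hqR0 _
  have hTpt : ∀ n, ‖B one_y x - Flow.polyApply (Flow.lapOp tq M) (P n) one_y x‖
      ≤ ε n * Real.sqrt (M y) / Real.sqrt (M x) := by
    intro n
    have h1 := hP2 n one_y (by rw [h1y]; exact KFL.lpNorm_indicator_lt_top M y)
    have h1' : Flow.lpNorm M 2 one_y = ENNReal.ofReal (M y) ^ (1/2:ℝ) := by
      rw [h1y]
      exact KFL.lpNorm_indicator M y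
    rw [h1'] at h1
    have h2 := KFL.pointwise_le M
      (fun s => B one_y s - Flow.polyApply (Flow.lapOp tq M) (P n) one_y s) x
    exact KFL.conv_real hMx hMy.le (hεpos n).le (le_trans h2 h1)
  -- limits
  have hρabs := Complex.norm_real (KFO.rho lev q y x)
  have hlim1 : Filter.Tendsto
      (fun n => ((KFO.rho lev q y x : ℝ) : ℂ) * ∑' j, w n j)
      Filter.atTop (nhds (B one_y x)) := by
    rw [tendsto_iff_norm_sub_tendsto_zero]
    apply squeeze_zero (fun n => norm_nonneg _)
      (g := fun n => ε n * Real.sqrt (M y) / Real.sqrt (M x))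
    · intro n
      rw [← hSn_tsum n, ← hpoly n, norm_sub_rev]
      exact hTpt n
    · have h3 := (hεlim.mul_const (Real.sqrt (M y))).div_const (Real.sqrt (M x))
      simpa using h3
  have hlim2 : Filter.Tendsto
      (fun n => ((KFO.rho lev q y x : ℝ) : ℂ) * ∑' j, w n j)
      Filter.atTop (nhds (((KFO.rho lev q y x : ℝ) : ℂ) * ∑' j, v j)) := by
    rw [tendsto_iff_norm_sub_tendsto_zero]
    apply squeeze_zero (fun n => norm_nonneg _)
      (g := fun n => |KFO.rho lev q y x| * (12 * ε n))
    · intro n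
      rw [← mul_sub, norm_mul, Complex.norm_real, Real.norm_eq_abs, norm_sub_rev]
      exact mul_le_mul_of_nonneg_left (hST n) (abs_nonneg _)
    · have h3 := hεlim.const_mul (12 * |KFO.rho lev q y x|)
      simp only [mul_zero] at h3
      apply Filter.Tendsto.congr' (by
        filter_upwards with n
        ring) h3
  have hBT : B one_y x = ((KFO.rho lev q y x : ℝ) : ℂ) * ∑' j, v j :=
    tendsto_nhds_unique hlim1 hlim2
  refine ⟨hsumv, ?_⟩
  show Flow.opKernel M B x y = _
  have hker : Flow.opKernel M B x y = (B one_y x) / ((M y : ℝ):ℂ) := rfl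
  rw [hker, hBT]
  have hsc : KFO.rho lev q y x / M y
      = (q:ℝ) ^ (-((((lev x + lev y : ℤ) : ℝ)) / 2)) := by
    rw [hM]
    show KFO.rho lev q y x / (q:ℝ)^(lev y) = _
    rw [KFO.rho, ← Real.rpow_intCast (q:ℝ) (lev y), ← Real.rpow_sub hqR0]
    congr 1
    push_cast
    ring
  rw [show ((KFO.rho lev q y x:ℝ):ℂ) * (∑' j, v j) / ((M y:ℝ):ℂ)
      = ((KFO.rho lev q y x / M y : ℝ):ℂ) * ∑' j, v j by rw [Complex.ofReal_div]; ring,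
    hsc, ← Complex.real_smul]
end
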